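/- arXiv:0804.4618 — 7 statements merged into one kernel-verified Lean document; each statement's English description precedes it below -/
import Mathlib

section
/- (Mandelstam–Tamm differential inequality, pure case.) Let h be self-adjoint on a finite-dimensional Hilbert space and φ a unit vector with P_φ(t) = |⟨φ, e^{−iht}φ⟩|². Then for all t ∈ ℝ, |P′_φ(t)| ≤ 2 (Δh)_φ √(P_φ(t)(1 − P_φ(t))). -/
open scoped InnerProductSpace
open Complex Filter Asymptotics

noncomputable section

variable {H : Type*} [NormedAddCommGroup H] [InnerProductSpace ℂ H] [FiniteDimensional ℂ H]

/-- |φ⟩⟨ψ| -/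
def ketbra (φ ψ : H) : H →L[ℂ] H := (innerSL ℂ ψ).smulRight φ

def tr (A : H →L[ℂ] H) : ℂ := LinearMap.trace ℂ H A.toLinearMap

/-- e^{-iht} -/
def timeEv (h : H →L[ℂ] H) (t : ℝ) : H →L[ℂ] H :=
  NormedSpace.exp ((-(Complex.I * (t : ℂ))) • h)

def expVec (h : H →L[ℂ] H) (φ : H) : ℝ := (⟪φ, h φ⟫_ℂ).re
def varVec (h : H →L[ℂ] H) (φ : H) : ℝ := (⟪φ, h (h φ)⟫_ℂ).re - (expVec h φ) ^ 2
def expMix (h ρ : H →L[ℂ] H) : ℝ := (tr (h ∘L ρ)).re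
def varMix (h ρ : H →L[ℂ] H) : ℝ := (tr (h ∘L h ∘L ρ)).re - (expMix h ρ) ^ 2
def survP (h : H →L[ℂ] H) (φ : H) (t : ℝ) : ℝ := ‖⟪φ, timeEv h t φ⟫_ℂ‖ ^ 2
def survPMix (h ρ Pr : H →L[ℂ] H) (t : ℝ) : ℝ :=
  (tr (Pr ∘L timeEv h t ∘L ρ ∘L timeEv h (-t))).re

omit [FiniteDimensional ℂ H] in
lemma inner_self_re' (x : H) : (⟪x, x⟫_ℂ).re = ‖x‖ ^ 2 := by
  rw [@norm_sq_eq_re_inner ℂ]; rfl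

omit [FiniteDimensional ℂ H] in
lemma inner_self_one (x : H) (hx : ‖x‖ = 1) : ⟪x, x⟫_ℂ = 1 := by
  have h1 := inner_self_re' x
  rw [hx] at h1
  have h2 : (⟪x, x⟫_ℂ).im = 0 := inner_self_im (𝕜 := ℂ) x
  rw [Complex.ext_iff]; simp [h1, h2, hx]

/-- time evolution preserves the norm -/
lemma timeEv_norm (h : H →L[ℂ] H) (hsa : IsSelfAdjoint h) (t : ℝ) (φ : H) :
    ‖timeEv h t φ‖ = ‖φ‖ := by
  have hstar : star (timeEv h t) = NormedSpace.exp ((Complex.I * (t : ℂ)) • h) := by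
    rw [timeEv, NormedSpace.star_exp, star_smul, hsa.star_eq]
    congr 1
    simp
  have hcomm : Commute ((Complex.I * (t : ℂ)) • h) ((-(Complex.I * (t : ℂ))) • h) :=
    ((Commute.refl h).smul_left _).smul_right _
  have hmul : star (timeEv h t) * timeEv h t = 1 := by
    rw [hstar, timeEv, ← NormedSpace.exp_add_of_commute_of_mem_ball (𝕂 := ℂ) hcomm
      ((NormedSpace.expSeries_radius_eq_top ℂ (H →L[ℂ] H)).symm ▸ edist_lt_top _ _)
      ((NormedSpace.expSeries_radius_eq_top ℂ (H →L[ℂ] H)).symm ▸ edist_lt_top _ _)]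
    simp
  have hi : ⟪timeEv h t φ, timeEv h t φ⟫_ℂ = ⟪φ, φ⟫_ℂ := by
    rw [← ContinuousLinearMap.adjoint_inner_left, ← ContinuousLinearMap.star_eq_adjoint,
      ← ContinuousLinearMap.mul_apply, hmul, ContinuousLinearMap.one_apply]
  have h2 : ‖timeEv h t φ‖ ^ 2 = ‖φ‖ ^ 2 := by
    rw [← inner_self_re', ← inner_self_re', hi]
  nlinarith [norm_nonneg (timeEv h t φ), norm_nonneg φ]

/-- derivative of the survival amplitude -/
lemma ampl_hasDerivAt (h : H →L[ℂ] H) (φ : H) (t : ℝ) :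
    HasDerivAt (fun s => ⟪φ, timeEv h s φ⟫_ℂ)
      ((-Complex.I) * ⟪φ, h (timeEv h t φ)⟫_ℂ) t := by
  have key : ∀ s : ℝ, (-(Complex.I * (s : ℂ))) • h = s • ((-Complex.I) • h) := by
    intro s; rw [← smul_assoc, Complex.real_smul]; congr 1; ring
  have hU : HasDerivAt (fun s => timeEv h s)
      (((-Complex.I) • h) * timeEv h t) t := by
    simp only [timeEv, key]
    exact hasDerivAt_exp_smul_const' (𝕂 := ℝ) (𝔸 := H →L[ℂ] H) _ _
  have hψ : HasDerivAt (fun s => timeEv h s φ)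
      ((((-Complex.I) • h) * timeEv h t) φ) t :=
    ((ContinuousLinearMap.apply ℂ H φ).restrictScalars ℝ).hasFDerivAt.comp_hasDerivAt t hU
  have := HasDerivAt.inner ℂ (hasDerivAt_const t φ) hψ
  simpa [inner_smul_right] using this

theorem stmt7 (h : H →L[ℂ] H) (hsa : IsSelfAdjoint h) (φ : H) (hφ : ‖φ‖ = 1) :
    ∀ t : ℝ, |deriv (survP h φ) t|
      ≤ 2 * Real.sqrt (varVec h φ) * Real.sqrt (survP h φ t * (1 - survP h φ t)) := by
  intro t
  set ψ := timeEv h t φ with hψdef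
  set c := ⟪φ, ψ⟫_ℂ with hcdef
  have hadj : ContinuousLinearMap.adjoint h = h := hsa.adjoint_eq
  set E := expVec h φ with hEdef
  -- expectation value is real
  have hEreal : ⟪φ, h φ⟫_ℂ = (E : ℂ) := by
    have h1 : ⟪h φ, φ⟫_ℂ = ⟪φ, h φ⟫_ℂ := by
      have := ContinuousLinearMap.adjoint_inner_left h φ φ
      rwa [hadj] at this
    have h2 : (starRingEnd ℂ) ⟪φ, h φ⟫_ℂ = ⟪φ, h φ⟫_ℂ := by
      rw [inner_conj_symm]; exact h1
    exact (Complex.conj_eq_iff_re.mp h2).symm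
  have hEφ : ⟪h φ, φ⟫_ℂ = (E : ℂ) := by
    rw [← inner_conj_symm, hEreal, Complex.conj_ofReal]
  -- derivative of survP
  set c' := (-Complex.I) * ⟪φ, h ψ⟫_ℂ with hc'def
  have hc' : HasDerivAt (fun s => ⟪φ, timeEv h s φ⟫_ℂ) c' t := ampl_hasDerivAt h φ t
  have hP : HasDerivAt (survP h φ)
      (((starRingEnd ℂ) c' * c + (starRingEnd ℂ) c * c').re) t := by
    have hmul : HasDerivAt (fun s => star ⟪φ, timeEv h s φ⟫_ℂ * ⟪φ, timeEv h s φ⟫_ℂ)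
        (star c' * c + star c * c') t := hc'.star.mul hc'
    have hre := Complex.reCLM.hasFDerivAt.comp_hasDerivAt t hmul
    have heq : (fun s => Complex.reCLM (star ⟪φ, timeEv h s φ⟫_ℂ * ⟪φ, timeEv h s φ⟫_ℂ))
        = survP h φ := by
      funext s
      show ((starRingEnd ℂ) ⟪φ, timeEv h s φ⟫_ℂ * ⟪φ, timeEv h s φ⟫_ℂ).re = survP h φ s
      rw [← Complex.normSq_eq_conj_mul_self, survP, ← Complex.sq_norm]
      norm_cast
    simp only [Function.comp_def] at hre
    rw [heq] at hre
    exact hre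
  have hderiv : deriv (survP h φ) t
      = ((starRingEnd ℂ) c' * c + (starRingEnd ℂ) c * c').re := hP.deriv
  -- decomposition ψ = c φ + χ
  set χ := ψ - c • φ with hχdef
  have hφφ : ⟪φ, φ⟫_ℂ = 1 := inner_self_one φ hφ
  have hφχ : ⟪φ, χ⟫_ℂ = 0 := by
    rw [hχdef, inner_sub_right, inner_smul_right, ← hcdef, hφφ]
    simp
  have hψnorm : ‖ψ‖ = 1 := by rw [hψdef, timeEv_norm h hsa, hφ]
  -- deviation vector
  set v := h φ - (E : ℂ) • φ with hvdef
  have hvχ : ⟪φ, h χ⟫_ℂ = ⟪v, χ⟫_ℂ := by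
    rw [hvdef, inner_sub_left, inner_smul_left, hφχ, mul_zero, sub_zero,
      ← ContinuousLinearMap.adjoint_inner_left, hadj]
  -- key expression for the derivative
  have hkey : deriv (survP h φ) t = 2 * ((starRingEnd ℂ) c * ⟪v, χ⟫_ℂ).im := by
    rw [hderiv]
    have hψeq : ψ = c • φ + χ := by rw [hχdef]; abel
    have h2 : ⟪φ, h ψ⟫_ℂ = c * (E : ℂ) + ⟪v, χ⟫_ℂ := by
      conv_lhs => rw [hψeq]
      rw [map_add, map_smul, inner_add_right, inner_smul_right, hEreal, hvχ]
    have hsum : ((starRingEnd ℂ) c' * c + (starRingEnd ℂ) c * c').re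
        = 2 * ((starRingEnd ℂ) c * c').re := by
      simp [Complex.add_re, Complex.mul_re]
      ring
    rw [hsum]
    congr 1
    rw [hc'def, h2]
    have : (starRingEnd ℂ) c * (-Complex.I * (c * (E : ℂ) + ⟪v, χ⟫_ℂ))
        = -Complex.I * (((Complex.normSq c : ℝ) : ℂ) * (E : ℂ)
            + (starRingEnd ℂ) c * ⟪v, χ⟫_ℂ) := by
      rw [Complex.normSq_eq_conj_mul_self]
      ring
    rw [this]
    simp
  -- norm of the deviation vector
  have hvnorm : ‖v‖ ^ 2 = varVec h φ := by
    have hhh : ⟪h φ, h φ⟫_ℂ = ⟪φ, h (h φ)⟫_ℂ := by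
      have := ContinuousLinearMap.adjoint_inner_left h (h φ) φ
      rwa [hadj] at this
    have hexp : ⟪v, v⟫_ℂ = ⟪φ, h (h φ)⟫_ℂ - (E : ℂ) ^ 2 := by
      rw [hvdef, inner_sub_left, inner_sub_right, inner_sub_right, inner_smul_left,
        inner_smul_left, inner_smul_right, inner_smul_right, hEreal, hEφ, hhh, hφφ,
        Complex.conj_ofReal]
      ring
    have hre := congrArg Complex.re hexp
    rw [inner_self_re'] at hre
    rw [hre, varVec, ← hEdef]
    simp [Complex.sub_re]
    norm_cast
  have hsqrt_v : Real.sqrt (varVec h φ) = ‖v‖ := by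
    rw [← hvnorm, Real.sqrt_sq (norm_nonneg v)]
  -- norm of χ and value of P
  have hPval : survP h φ t = ‖c‖ ^ 2 := rfl
  have hχnorm : ‖χ‖ ^ 2 = 1 - survP h φ t := by
    have hcc : ⟪ψ, φ⟫_ℂ = (starRingEnd ℂ) c := by rw [hcdef, ← inner_conj_symm]
    have hexp : ⟪χ, χ⟫_ℂ = 1 - ((Complex.normSq c : ℝ) : ℂ) := by
      rw [hχdef, inner_sub_left, inner_sub_right, inner_sub_right, inner_smul_left,
        inner_smul_left, inner_smul_right, inner_smul_right, inner_self_one ψ hψnorm,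
        hφφ, hcc, ← hcdef, Complex.normSq_eq_conj_mul_self]
      ring
    have hre := congrArg Complex.re hexp
    rw [inner_self_re'] at hre
    rw [hre, hPval, ← Complex.sq_norm]
    norm_cast
  have hsqrt_P : Real.sqrt (survP h φ t) = ‖c‖ := by
    rw [hPval, Real.sqrt_sq (norm_nonneg c)]
  have hsqrt_1P : Real.sqrt (1 - survP h φ t) = ‖χ‖ := by
    rw [← hχnorm, Real.sqrt_sq (norm_nonneg χ)]
  have hP_nonneg : 0 ≤ survP h φ t := by rw [hPval]; positivity
  -- final estimate
  rw [hkey]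
  have hbound : |((starRingEnd ℂ) c * ⟪v, χ⟫_ℂ).im| ≤ ‖c‖ * (‖v‖ * ‖χ‖) := by
    calc |((starRingEnd ℂ) c * ⟪v, χ⟫_ℂ).im|
        ≤ ‖(starRingEnd ℂ) c * ⟪v, χ⟫_ℂ‖ := Complex.abs_im_le_norm _
      _ = ‖c‖ * ‖⟪v, χ⟫_ℂ‖ := by rw [norm_mul]; simp
      _ ≤ ‖c‖ * (‖v‖ * ‖χ‖) := by
          apply mul_le_mul_of_nonneg_left _ (norm_nonneg c)
          exact norm_inner_le_norm v χ
  rw [Real.sqrt_mul hP_nonneg, hsqrt_P, hsqrt_1P, hsqrt_v, abs_mul]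
  calc |(2 : ℝ)| * |((starRingEnd ℂ) c * ⟪v, χ⟫_ℂ).im|
      ≤ 2 * (‖c‖ * (‖v‖ * ‖χ‖)) := by
        rw [_root_.abs_two]
        exact mul_le_mul_of_nonneg_left hbound (by norm_num)
    _ = 2 * ‖v‖ * (‖c‖ * ‖χ‖) := by ring
end
end

section
/- (Fleming's bound, pure case.) Let h be self-adjoint on a finite-dimensional Hilbert space and φ a unit vector. Then P_φ(t) = |⟨φ, e^{−iht}φ⟩|² ≥ cos²((Δh)_φ t) for all real t with (Δh)_φ |t| ≤ π/2. -/
open scoped InnerProductSpace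
open Complex Filter Asymptotics

noncomputable section

variable {H : Type*} [NormedAddCommGroup H] [InnerProductSpace ℂ H] [FiniteDimensional ℂ H]

set_option linter.unusedSectionVars false

section AuxReal
open Real Set


lemma key_cos_ineq {a : ℝ} (ha : 0 < a) (ha2 : a ≤ π / 2) (x : ℝ) :
    Real.cos a + Real.sin a / (2 * a) * (a ^ 2 - x ^ 2) ≤ Real.cos x := by
  have hane : a ≠ 0 := ha.ne'
  have haπ : a ≤ π := ha2.trans (by linarith [pi_pos])
  have hconc := strictConcaveOn_sin_Icc.concaveOn
  have claim1 : ∀ y ∈ Icc (0:ℝ) a, Real.sin a / a * y ≤ Real.sin y := by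
    rintro y ⟨hy0, hya⟩
    have h := hconc.2 ⟨ha.le, haπ⟩ ⟨le_refl (0:ℝ), pi_pos.le⟩
      (show (0:ℝ) ≤ y / a by positivity)
      (show (0:ℝ) ≤ 1 - y / a by
        have : y / a ≤ 1 := (div_le_one ha).2 hya
        linarith)
      (show y / a + (1 - y / a) = 1 by ring)
    simp only [smul_eq_mul, Real.sin_zero, mul_zero, add_zero] at h
    have h2 : y / a * a = y := by field_simp
    rw [h2] at h
    calc Real.sin a / a * y = y / a * Real.sin a := by ring
    _ ≤ Real.sin y := h
  have claim2 : ∀ y, a ≤ y → Real.sin y ≤ Real.sin a / a * y := by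
    intro y hay
    have hy0 : 0 < y := ha.trans_le hay
    rcases le_or_gt y π with hyπ | hyπ
    · have h := hconc.2 ⟨hy0.le, hyπ⟩ ⟨le_refl (0:ℝ), pi_pos.le⟩
        (show (0:ℝ) ≤ a / y by positivity)
        (show (0:ℝ) ≤ 1 - a / y by
          have : a / y ≤ 1 := (div_le_one hy0).2 hay
          linarith)
        (show a / y + (1 - a / y) = 1 by ring)
      simp only [smul_eq_mul, Real.sin_zero, mul_zero, add_zero] at h
      have h2 : a / y * y = a := by field_simp
      rw [h2] at h
      rw [div_mul_eq_mul_div, le_div_iff₀ ha]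
      have h3 : a / y * Real.sin y * y = Real.sin y * a := by field_simp
      nlinarith [h]
    · have hJ : 2 / π * a ≤ Real.sin a := Real.mul_le_sin ha.le ha2
      have hs1 : Real.sin y ≤ 1 := Real.sin_le_one y
      rw [div_mul_eq_mul_div, le_div_iff₀ ha]
      have hπ : (0:ℝ) < π := pi_pos
      have h4 : 2 / π * a * π ≤ 2 / π * a * y :=
        mul_le_mul_of_nonneg_left hyπ.le (by positivity)
      have h5 : 2 / π * a * π = 2 * a := by field_simp
      have h6 : 2 / π * a * y ≤ Real.sin a * y :=
        mul_le_mul_of_nonneg_right hJ hy0.le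
      nlinarith
  set c : ℝ := Real.sin a / (2 * a) with hc
  have hrw : ∀ y : ℝ, -Real.sin y + c * (2 * y) = -Real.sin y + Real.sin a / a * y := by
    intro y; rw [hc]; field_simp
  set f : ℝ → ℝ := fun y => Real.cos y + c * y ^ 2 with hf
  have hd : ∀ y : ℝ, HasDerivAt f (-Real.sin y + c * (2 * y)) y := by
    intro y
    have h1 := Real.hasDerivAt_cos y
    have h2 := (hasDerivAt_pow 2 y).const_mul c
    exact h1.add (by simpa using h2)
  have hcont : Continuous f := by
    have : Differentiable ℝ f := fun y => (hd y).differentiableAt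
    exact this.continuous
  have hA : AntitoneOn f (Icc 0 a) := by
    apply antitoneOn_of_deriv_nonpos (convex_Icc 0 a) hcont.continuousOn
    · exact fun y _ => (hd y).differentiableAt.differentiableWithinAt
    · intro y hy
      rw [interior_Icc] at hy
      rw [(hd y).deriv, hrw]
      have := claim1 y ⟨hy.1.le, hy.2.le⟩
      linarith
  have hM : MonotoneOn f (Ici a) := by
    apply monotoneOn_of_deriv_nonneg (convex_Ici a) hcont.continuousOn
    · exact fun y _ => (hd y).differentiableAt.differentiableWithinAt
    · intro y hy
      rw [interior_Ici] at hy
      rw [(hd y).deriv, hrw]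
      have := claim2 y hy.le
      linarith
  have hfa : f a ≤ f |x| := by
    rcases le_total |x| a with hxa | hxa
    · exact hA ⟨abs_nonneg x, hxa⟩ (right_mem_Icc.2 ha.le) hxa
    · exact hM (self_mem_Ici) hxa hxa
  have hcx : Real.cos |x| = Real.cos x := Real.cos_abs x
  have hsx : |x| ^ 2 = x ^ 2 := sq_abs x
  simp only [hf] at hfa
  rw [hcx, hsx] at hfa
  have : c * (a ^ 2 - x ^ 2) = c * a ^ 2 - c * x ^ 2 := by ring
  linarith

lemma sum_cos_ge {n : ℕ} (p x : Fin n → ℝ) (hp : ∀ i, 0 ≤ p i)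
    (hps : ∑ i, p i = 1) {a : ℝ} (ha : 0 ≤ a) (ha2 : a ≤ π / 2)
    (hx : ∑ i, p i * x i ^ 2 = a ^ 2) :
    Real.cos a ≤ ∑ i, p i * Real.cos (x i) := by
  rcases ha.eq_or_lt with h0 | hpos
  · -- a = 0
    have ha0 : a = 0 := h0.symm
    subst ha0
    simp only [Real.cos_zero]
    have hz : ∀ i ∈ Finset.univ, p i * x i ^ 2 = 0 := by
      rw [← Finset.sum_eq_zero_iff_of_nonneg]
      · simpa using hx
      · exact fun i _ => mul_nonneg (hp i) (sq_nonneg _)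
    have hterm : ∀ i ∈ Finset.univ, p i ≤ p i * Real.cos (x i) := by
      intro i _
      rcases (hp i).eq_or_lt with hpi | hpi
      · rw [← hpi]; simp
      · have hxi : x i = 0 := by
          have := hz i (Finset.mem_univ i)
          have hx2 : x i ^ 2 = 0 := by
            rcases mul_eq_zero.1 this with h | h
            · exact absurd h.symm hpi.ne
            · exact h
          exact pow_eq_zero_iff two_ne_zero |>.1 hx2
        rw [hxi]; simp
    calc (1:ℝ) = ∑ i, p i := hps.symm
    _ ≤ ∑ i, p i * Real.cos (x i) := Finset.sum_le_sum hterm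
  · set c : ℝ := Real.sin a / (2 * a) with hc
    have hterm : ∀ i ∈ Finset.univ, p i * (Real.cos a + c * (a ^ 2 - x i ^ 2)) ≤ p i * Real.cos (x i) :=
      fun i _ => mul_le_mul_of_nonneg_left (key_cos_ineq hpos ha2 (x i)) (hp i)
    have hsum := Finset.sum_le_sum hterm
    have hlhs : ∑ i, p i * (Real.cos a + c * (a ^ 2 - x i ^ 2))
        = (Real.cos a + c * a ^ 2) * (∑ i, p i) - c * (∑ i, p i * x i ^ 2) := by
      rw [Finset.mul_sum, Finset.mul_sum, ← Finset.sum_sub_distrib]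
      exact Finset.sum_congr rfl fun i _ => by ring
    rw [hlhs, hps, hx] at hsum
    calc Real.cos a = (Real.cos a + c * a ^ 2) * 1 - c * a ^ 2 := by ring
    _ ≤ ∑ i, p i * Real.cos (x i) := hsum

end AuxReal

lemma exp_eigen (A : H →L[ℂ] H) {c : ℂ} {v : H} (hv : A v = c • v) :
    NormedSpace.exp A v = Complex.exp c • v := by
  have hpow : ∀ k : ℕ, (A ^ k) v = c ^ k • v := by
    intro k
    induction k with
    | zero => simp
    | succ k ih =>
        rw [pow_succ, ContinuousLinearMap.mul_apply, hv, map_smul, ih, smul_smul,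
          pow_succ, mul_comm]
  rw [NormedSpace.exp_eq_tsum ℂ]
  have hs : Summable fun k : ℕ => ((Nat.factorial k : ℂ))⁻¹ • A ^ k := NormedSpace.expSeries_summable' A
  have happ : (∑' k : ℕ, ((Nat.factorial k : ℂ))⁻¹ • A ^ k) v = ∑' k : ℕ, (((Nat.factorial k : ℂ))⁻¹ • A ^ k) v :=
    (ContinuousLinearMap.apply ℂ H v).map_tsum hs
  rw [happ]
  have h2 : ∀ k : ℕ, (((Nat.factorial k : ℂ))⁻¹ • A ^ k) v = (((Nat.factorial k : ℂ))⁻¹ * c ^ k) • v := by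
    intro k
    rw [ContinuousLinearMap.smul_apply, hpow, smul_smul]
  simp_rw [h2]
  have hs2 : Summable fun k : ℕ => ((Nat.factorial k : ℂ))⁻¹ * c ^ k := by
    simpa [smul_eq_mul] using NormedSpace.expSeries_summable' (𝕂 := ℂ) c
  rw [hs2.tsum_smul_const]
  congr 1
  rw [Complex.exp_eq_exp_ℂ, NormedSpace.exp_eq_tsum ℂ]
  simp [smul_eq_mul]

lemma inner_eigen {n : ℕ} (b : OrthonormalBasis (Fin n) ℂ H) (U : H →L[ℂ] H)
    (g : Fin n → ℂ) (hU : ∀ i, U (b i) = g i • b i) (φ : H) :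
    ⟪φ, U φ⟫_ℂ = ∑ i, (‖b.repr φ i‖ ^ 2 : ℝ) * g i := by
  have hUφ : U φ = ∑ i, (b.repr φ i * g i) • b i := by
    conv_lhs => rw [← b.sum_repr φ]
    rw [map_sum]
    exact Finset.sum_congr rfl fun i _ => by rw [map_smul, hU, smul_smul]
  rw [hUφ, inner_sum]
  refine Finset.sum_congr rfl fun i _ => ?_
  rw [inner_smul_right]
  have h1 : ⟪φ, b i⟫_ℂ = starRingEnd ℂ (b.repr φ i) := by
    rw [b.repr_apply_apply, ← inner_conj_symm]
  rw [h1]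
  have := Complex.mul_conj (b.repr φ i)
  push_cast
  rw [mul_comm (b.repr φ i) (g i), mul_assoc, this]
  rw [Complex.normSq_eq_norm_sq]
  push_cast
  ring


theorem stmt8 (h : H →L[ℂ] H) (hsa : IsSelfAdjoint h) (φ : H) (hφ : ‖φ‖ = 1) :
    ∀ t : ℝ, Real.sqrt (varVec h φ) * |t| ≤ Real.pi / 2 →
      survP h φ t ≥ Real.cos (Real.sqrt (varVec h φ) * t) ^ 2 := by
  intro t ht
  have hsym : (h : H →ₗ[ℂ] H).IsSymmetric := hsa.isSymmetric
  set n := Module.finrank ℂ H with hn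
  have hn' : Module.finrank ℂ H = n := rfl
  set b := hsym.eigenvectorBasis hn' with hbdef
  set μ := hsym.eigenvalues hn' with hμdef
  have hb : ∀ i, h (b i) = (μ i : ℂ) • b i := fun i => hsym.apply_eigenvectorBasis hn' i
  set p : Fin n → ℝ := fun i => ‖b.repr φ i‖ ^ 2 with hpdef
  have hp : ∀ i, 0 ≤ p i := fun i => sq_nonneg _
  -- sum p = 1
  have hid : ⟪φ, (1 : H →L[ℂ] H) φ⟫_ℂ = ∑ i, (p i : ℂ) * 1 :=
    inner_eigen b 1 (fun _ => 1) (fun i => by simp) φ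
  have hps : ∑ i, p i = 1 := by
    have h1 : ⟪φ, φ⟫_ℂ = (1 : ℂ) := by
      rw [inner_self_eq_norm_sq_to_K, hφ]; norm_num
    simp only [ContinuousLinearMap.one_apply, h1, mul_one] at hid
    have := congrArg Complex.re hid
    simpa using this.symm
  -- expVec
  have hEc : ⟪φ, h φ⟫_ℂ = ∑ i, (p i : ℂ) * (μ i : ℂ) := inner_eigen b h (fun i => (μ i : ℂ)) hb φ
  have hE : expVec h φ = ∑ i, p i * μ i := by
    rw [expVec, hEc]
    push_cast
    rw [Complex.re_sum]
    norm_num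
  set E := expVec h φ with hEdef
  -- second moment
  have hM2c : ⟪φ, (h ∘L h) φ⟫_ℂ = ∑ i, (p i : ℂ) * ((μ i : ℂ) ^ 2) := by
    apply inner_eigen b (h ∘L h) (fun i => (μ i : ℂ) ^ 2)
    intro i
    rw [ContinuousLinearMap.comp_apply, hb, map_smul, hb, smul_smul, sq]
  have hM2 : (⟪φ, h (h φ)⟫_ℂ).re = ∑ i, p i * μ i ^ 2 := by
    have : ⟪φ, h (h φ)⟫_ℂ = ⟪φ, (h ∘L h) φ⟫_ℂ := rfl
    rw [this, hM2c, Complex.re_sum]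
    push_cast
    refine Finset.sum_congr rfl fun i _ => ?_
    simp [← Complex.ofReal_pow]
  have hVar : varVec h φ = ∑ i, p i * (μ i - E) ^ 2 := by
    rw [varVec, hM2]
    rw [show expVec h φ = E from rfl]
    have expand : ∀ i ∈ Finset.univ, p i * (μ i - E) ^ 2
        = p i * μ i ^ 2 - 2 * E * (p i * μ i) + E ^ 2 * p i := fun i _ => by ring
    rw [Finset.sum_congr rfl expand, Finset.sum_add_distrib, Finset.sum_sub_distrib,
      ← Finset.mul_sum, ← Finset.mul_sum, hps, ← hE]
    ring
  have hV0 : 0 ≤ varVec h φ := by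
    rw [hVar]
    exact Finset.sum_nonneg fun i _ => mul_nonneg (hp i) (sq_nonneg _)
  set Δ := Real.sqrt (varVec h φ) with hΔ
  have hΔ0 : 0 ≤ Δ := Real.sqrt_nonneg _
  have hΔsq : Δ ^ 2 = varVec h φ := Real.sq_sqrt hV0
  -- survival amplitude
  set x : Fin n → ℝ := fun i => (μ i - E) * t with hxdef
  have hxs : ∑ i, p i * x i ^ 2 = (Δ * |t|) ^ 2 := by
    have : ∀ i ∈ Finset.univ, p i * x i ^ 2 = p i * (μ i - E) ^ 2 * t ^ 2 := fun i _ => by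
      rw [hxdef]; ring
    rw [Finset.sum_congr rfl this, ← Finset.sum_mul, ← hVar]
    rw [mul_pow, hΔsq, _root_.sq_abs]
  have hsum := sum_cos_ge p x hp hps (mul_nonneg hΔ0 (abs_nonneg t)) ht hxs
  -- amplitude formula
  have hUb : ∀ i, timeEv h t (b i) = Complex.exp (-(Complex.I * t) * μ i) • b i := by
    intro i
    rw [timeEv]
    apply exp_eigen
    rw [ContinuousLinearMap.smul_apply, hb, smul_smul]
  have hac : ⟪φ, timeEv h t φ⟫_ℂ = ∑ i, (p i : ℂ) * Complex.exp (-(Complex.I * t) * μ i) :=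
    inner_eigen b (timeEv h t) _ hUb φ
  set z := ⟪φ, timeEv h t φ⟫_ℂ with hzdef
  set w := Complex.exp (Complex.I * E * t) * z with hwdef
  have habs : ‖w‖ = ‖z‖ := by
    rw [hwdef, norm_mul, Complex.norm_exp]
    have : (Complex.I * E * t).re = 0 := by simp
    rw [this, Real.exp_zero, one_mul]
  have hwre : w.re = ∑ i, p i * Real.cos (x i) := by
    rw [hwdef, hac, Finset.mul_sum]
    have hterm : ∀ i ∈ Finset.univ,
        Complex.exp (Complex.I * E * t) * ((p i : ℂ) * Complex.exp (-(Complex.I * t) * μ i))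
        = (p i : ℂ) * Complex.exp ((-(x i) : ℝ) * Complex.I) := by
      intro i _
      rw [mul_comm (Complex.exp _) _, mul_assoc, ← Complex.exp_add]
      congr 2
      rw [hxdef]
      push_cast
      ring
    rw [Finset.sum_congr rfl hterm, Complex.re_sum]
    refine Finset.sum_congr rfl fun i _ => ?_
    simp only [Complex.mul_re, Complex.ofReal_re, Complex.ofReal_im, zero_mul, sub_zero]
    rw [Complex.exp_ofReal_mul_I_re, Real.cos_neg]
  -- finish
  have hle : Real.cos (Δ * |t|) ≤ ‖z‖ := by
    calc Real.cos (Δ * |t|) ≤ w.re := by rw [hwre]; exact hsum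
    _ ≤ ‖w‖ := Complex.re_le_norm w
    _ = ‖z‖ := habs
  have hcos0 : 0 ≤ Real.cos (Δ * |t|) :=
    Real.cos_nonneg_of_mem_Icc ⟨by nlinarith [mul_nonneg hΔ0 (abs_nonneg t), Real.pi_pos], ht⟩
  have hcoseq : Real.cos (Δ * t) = Real.cos (Δ * |t|) := by
    rw [← Real.cos_abs (Δ * t), abs_mul, _root_.abs_of_nonneg hΔ0]
  rw [ge_iff_le, survP, ← hzdef, hcoseq]
  exact pow_le_pow_left₀ hcos0 hle 2
end
end

section
/- (Orthogonalization time bound.) Let h be self-adjoint on a finite-dimensional Hilbert space and φ a unit vector with (Δh)_φ > 0. If t > 0 satisfies ⟨φ, e^{−iht}φ⟩ = 0, then t ≥ π / (2 (Δh)_φ). -/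
open scoped InnerProductSpace
open Complex Filter Asymptotics

noncomputable section

variable {H : Type*} [NormedAddCommGroup H] [InnerProductSpace ℂ H] [FiniteDimensional ℂ H]

lemma exp_apply_eigen (A : H →L[ℂ] H) (c : ℂ) (v : H) (hv : A v = c • v) :
    NormedSpace.exp A v = Complex.exp c • v := by
  have hpow : ∀ n : ℕ, (A ^ n) v = c ^ n • v := by
    intro n
    induction n with
    | zero => simp
    | succ n ih =>
      rw [pow_succ, pow_succ]
      calc (A ^ n * A) v = (A ^ n) (A v) := rfl
        _ = (A ^ n) (c • v) := by rw [hv]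
        _ = c • ((A ^ n) v) := by rw [map_smul]
        _ = (c ^ n * c) • v := by rw [ih, smul_smul, mul_comm]
  have h1 : HasSum (fun n : ℕ => (((n.factorial : ℕ) : ℂ)⁻¹ • A ^ n)) (NormedSpace.exp A) :=
    NormedSpace.exp_series_hasSum_exp' A
  have h2 : HasSum (fun n : ℕ => (((n.factorial : ℕ) : ℂ)⁻¹ • A ^ n) v) (NormedSpace.exp A v) :=
    h1.mapL (ContinuousLinearMap.apply ℂ H v)
  have h3 : HasSum (fun n : ℕ => (((n.factorial : ℕ) : ℂ)⁻¹ • A ^ n) v) (Complex.exp c • v) := by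
    have h4 : HasSum (fun n : ℕ => (((n.factorial : ℕ) : ℂ)⁻¹ • c ^ n)) (Complex.exp c) := by
      rw [Complex.exp_eq_exp_ℂ]
      exact NormedSpace.exp_series_hasSum_exp' c
    have h5 := h4.smul_const v
    convert h5 using 2 with n
    show (((n.factorial : ℕ) : ℂ)⁻¹ • A ^ n) v = (((n.factorial : ℕ) : ℂ)⁻¹ • c ^ n) • v
    rw [ContinuousLinearMap.smul_apply, hpow, smul_smul, smul_eq_mul]
  exact h2.unique h3

lemma sin_lower (y : ℝ) (hy : 0 ≤ y) : y - y^3/6 ≤ Real.sin y := by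
  have key : ∀ z ∈ Set.Ici (0:ℝ), HasDerivAt (fun w => Real.sin w - w + w^3/6)
      (Real.cos z - 1 + z^2/2) z := by
    intro z _
    have h1 := (Real.hasDerivAt_sin z).sub (hasDerivAt_id z)
    have h2 := (hasDerivAt_pow 3 z).div_const 6
    refine (h1.add h2).congr_deriv ?_
    norm_num
    ring
  have mono : MonotoneOn (fun w => Real.sin w - w + w^3/6) (Set.Ici 0) := by
    apply monotoneOn_of_deriv_nonneg (convex_Ici 0)
    · exact (Continuous.continuousOn (by continuity))
    · intro z hz
      exact (key z (interior_subset hz)).differentiableAt.differentiableWithinAt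
    · intro z hz
      rw [(key z (interior_subset hz)).deriv]
      have := Real.one_sub_sq_div_two_le_cos (x := z)
      linarith
  have h0 := mono (Set.self_mem_Ici) (Set.mem_Ici.mpr hy) hy
  simp at h0
  linarith

lemma key_aux2 (y : ℝ) (hy0 : 0 ≤ y) (hy2 : y ≤ Real.pi/2) :
    Real.pi^2/4 ≤ (Real.pi/2 - y)^2 + Real.pi * Real.sin y := by
  have hπ := Real.pi_pos
  have hπ' : Real.pi < 3.15 := Real.pi_lt_d2
  have hs : y - y^3/6 ≤ Real.sin y := sin_lower y hy0
  have hπ2 : Real.pi^2 < 9.9225 := by nlinarith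
  have h6 : Real.pi * y ≤ 6 := by nlinarith [mul_le_mul_of_nonneg_left hy2 hπ.le]
  have hkey : 0 ≤ y^2 * (6 - Real.pi*y) := mul_nonneg (sq_nonneg y) (by linarith)
  have hmul : Real.pi * (y - y^3/6) ≤ Real.pi * Real.sin y :=
    mul_le_mul_of_nonneg_left hs hπ.le
  nlinarith [hkey, hmul]

lemma key_aux (x : ℝ) (hx : 0 ≤ x) :
    Real.pi^2/4 ≤ x^2 + Real.pi * Real.cos x := by
  have hπ := Real.pi_pos
  rcases le_or_gt x (Real.pi/2) with hle | hgt
  · have := key_aux2 (Real.pi/2 - x) (by linarith) (by linarith)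
    rw [Real.sin_pi_div_two_sub] at this
    have hx2 : (Real.pi/2 - (Real.pi/2 - x))^2 = x^2 := by ring
    linarith [this, hx2.le, hx2.ge]
  · have h1 : Real.sin (x - Real.pi/2) ≤ x - Real.pi/2 :=
      Real.sin_le (by linarith)
    rw [Real.sin_sub_pi_div_two] at h1
    nlinarith [sq_nonneg (x - Real.pi/2)]

lemma key_ineq (x : ℝ) : Real.pi^2/4 ≤ x^2 + Real.pi * Real.cos x := by
  rcases le_or_gt 0 x with hx | hx
  · exact key_aux x hx
  · have := key_aux (-x) (by linarith)
    simpa [Real.cos_neg] using this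


theorem stmt9 (h : H →L[ℂ] H) (hsa : IsSelfAdjoint h) (φ : H) (hφ : ‖φ‖ = 1)
    (hΔ : 0 < Real.sqrt (varVec h φ))
    (t : ℝ) (ht : 0 < t) (horth : ⟪φ, timeEv h t φ⟫_ℂ = 0) :
    t ≥ Real.pi / (2 * Real.sqrt (varVec h φ)) := by
  classical
  have hsym : (h : H →ₗ[ℂ] H).IsSymmetric :=
    ContinuousLinearMap.isSelfAdjoint_iff_isSymmetric.mp hsa
  set n := Module.finrank ℂ H with hn
  let b : OrthonormalBasis (Fin n) ℂ H := hsym.eigenvectorBasis rfl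
  let lam : Fin n → ℝ := hsym.eigenvalues rfl
  have heig : ∀ i, h (b i) = (lam i : ℂ) • b i := fun i =>
    hsym.apply_eigenvectorBasis rfl i
  let c : Fin n → ℂ := fun i => ⟪b i, φ⟫_ℂ
  have hrepr : ∑ i, c i • b i = φ := b.sum_repr' φ
  have hφb : ∀ i, ⟪φ, b i⟫_ℂ = starRingEnd ℂ (c i) := fun i => by
    rw [← inner_conj_symm]
  let p : Fin n → ℝ := fun i => Complex.normSq (c i)
  have hp : ∀ i, 0 ≤ p i := fun i => Complex.normSq_nonneg _
  -- the master inner product formula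
  have key : ∀ w : Fin n → ℂ, ⟪φ, ∑ i, (w i * c i) • b i⟫_ℂ = ∑ i, (p i : ℂ) * w i := by
    intro w
    rw [inner_sum]
    refine Finset.sum_congr rfl fun i _ => ?_
    rw [inner_smul_right, hφb, mul_assoc, Complex.mul_conj]
    ring
  -- images of φ
  have himg : h φ = ∑ i, ((lam i : ℂ) * c i) • b i := by
    conv_lhs => rw [← hrepr]
    rw [map_sum]
    refine Finset.sum_congr rfl fun i _ => ?_
    rw [map_smul, heig, smul_smul, mul_comm]
  have himg2 : h (h φ) = ∑ i, (((lam i : ℂ))^2 * c i) • b i := by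
    rw [himg, map_sum]
    refine Finset.sum_congr rfl fun i _ => ?_
    rw [map_smul, heig, smul_smul]
    ring_nf
  have htime : timeEv h t φ
      = ∑ i, (Complex.exp (-(Complex.I * t * lam i)) * c i) • b i := by
    conv_lhs => rw [← hrepr]
    rw [timeEv, map_sum]
    refine Finset.sum_congr rfl fun i _ => ?_
    rw [map_smul]
    have : ((-(Complex.I * (t : ℂ))) • h) (b i) = (-(Complex.I * t * lam i)) • b i := by
      rw [ContinuousLinearMap.smul_apply, heig, smul_smul]
      ring_nf
    rw [exp_apply_eigen _ _ _ this, smul_smul, mul_comm]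
  -- inner products
  have hA : (1 : ℂ) = ∑ i, (p i : ℂ) := by
    have h1 : ⟪φ, φ⟫_ℂ = ∑ i, (p i : ℂ) := by
      nth_rewrite 2 [← hrepr]
      simpa using key fun _ => 1
    rw [← h1, inner_self_eq_norm_sq_to_K, hφ]
    norm_num
  have hB : ⟪φ, h φ⟫_ℂ = ∑ i, (p i : ℂ) * (lam i : ℂ) := by rw [himg]; exact key _
  have hC : ⟪φ, h (h φ)⟫_ℂ = ∑ i, (p i : ℂ) * (lam i : ℂ)^2 := by rw [himg2]; exact key _
  have hD : ∑ i, (p i : ℂ) * Complex.exp (-(Complex.I * t * lam i)) = 0 := by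
    rw [← key _, ← htime]; exact horth
  -- pass to real statements
  have hsum1 : ∑ i, p i = 1 := by
    have : ((∑ i, p i : ℝ) : ℂ) = ((1 : ℝ) : ℂ) := by push_cast; rw [← hA]
    exact_mod_cast this
  set m : ℝ := expVec h φ with hm
  have hmsum : m = ∑ i, p i * lam i := by
    have h1 : ⟪φ, h φ⟫_ℂ = ((∑ i, p i * lam i : ℝ) : ℂ) := by rw [hB]; push_cast; ring
    rw [hm, expVec, h1, Complex.ofReal_re]
  have hM2 : (⟪φ, h (h φ)⟫_ℂ).re = ∑ i, p i * lam i ^ 2 := by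
    have h1 : ⟪φ, h (h φ)⟫_ℂ = ((∑ i, p i * lam i ^ 2 : ℝ) : ℂ) := by rw [hC]; push_cast; ring
    rw [h1, Complex.ofReal_re]
  -- the cosine sum vanishes
  have hZ : ∑ i, (p i : ℂ) * Complex.exp (((-(t * (lam i - m)) : ℝ)) * Complex.I) = 0 := by
    have hterm : ∀ i, Complex.exp (((-(t * (lam i - m)) : ℝ)) * Complex.I)
        = Complex.exp (Complex.I * t * m) * Complex.exp (-(Complex.I * t * lam i)) := by
      intro i
      rw [← Complex.exp_add]
      congr 1
      push_cast
      ring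
    calc ∑ i, (p i : ℂ) * Complex.exp (((-(t * (lam i - m)) : ℝ)) * Complex.I)
        = Complex.exp (Complex.I * t * m)
            * ∑ i, (p i : ℂ) * Complex.exp (-(Complex.I * t * lam i)) := by
          rw [Finset.mul_sum]
          refine Finset.sum_congr rfl fun i _ => ?_
          rw [hterm i]; ring
      _ = 0 := by rw [hD, mul_zero]
  have hcos : ∑ i, p i * Real.cos (t * (lam i - m)) = 0 := by
    have h1 := congrArg Complex.re hZ
    rw [Complex.re_sum] at h1
    have h2 : ∀ i : Fin n, ((p i : ℂ) * Complex.exp (((-(t * (lam i - m)) : ℝ)) * Complex.I)).re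
        = p i * Real.cos (t * (lam i - m)) := by
      intro i
      rw [Complex.re_ofReal_mul, Complex.exp_ofReal_mul_I_re, Real.cos_neg]
    rw [Finset.sum_congr rfl fun i _ => h2 i] at h1
    simpa using h1
  -- the key inequality summed
  have hstep : ∀ i, Real.pi^2/4 * p i
      ≤ p i * ((t * (lam i - m))^2 + Real.pi * Real.cos (t * (lam i - m))) := by
    intro i
    rw [mul_comm]
    exact mul_le_mul_of_nonneg_left (key_ineq _) (hp i)
  have hsumineq : Real.pi^2/4
      ≤ ∑ i, p i * ((t * (lam i - m))^2 + Real.pi * Real.cos (t * (lam i - m))) := by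
    calc Real.pi^2/4 = Real.pi^2/4 * ∑ i, p i := by rw [hsum1]; ring
      _ = ∑ i, Real.pi^2/4 * p i := Finset.mul_sum _ _ _
      _ ≤ _ := Finset.sum_le_sum fun i _ => hstep i
  -- expand the sum
  have hexpand : ∑ i, p i * ((t * (lam i - m))^2 + Real.pi * Real.cos (t * (lam i - m)))
      = t^2 * ((∑ i, p i * lam i ^ 2) - m^2) := by
    have e1 : ∀ i, p i * ((t * (lam i - m))^2 + Real.pi * Real.cos (t * (lam i - m)))
        = t^2 * (p i * lam i^2) - 2*t^2*m*(p i * lam i) + t^2*m^2*(p i)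
          + Real.pi * (p i * Real.cos (t * (lam i - m))) := fun i => by ring
    rw [Finset.sum_congr rfl fun i _ => e1 i]
    rw [Finset.sum_add_distrib, Finset.sum_add_distrib, Finset.sum_sub_distrib,
      ← Finset.mul_sum, ← Finset.mul_sum, ← Finset.mul_sum, ← Finset.mul_sum,
      hcos, hsum1, ← hmsum]
    ring
  have hVvar : varVec h φ = (∑ i, p i * lam i ^ 2) - m^2 := by
    rw [varVec, hM2, ← hm]
  have hmain : Real.pi^2/4 ≤ t^2 * varVec h φ := by
    rw [hVvar]; rw [hexpand] at hsumineq; exact hsumineq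
  -- conclude
  have hV : 0 < varVec h φ := Real.sqrt_pos.mp hΔ
  have h1 : Real.pi/2 ≤ t * Real.sqrt (varVec h φ) := by
    have h2 : (Real.pi/2)^2 ≤ (t * Real.sqrt (varVec h φ))^2 := by
      rw [mul_pow, Real.sq_sqrt hV.le]
      nlinarith [hmain]
    have h3 := Real.sqrt_le_sqrt h2
    rwa [Real.sqrt_sq (by positivity), Real.sqrt_sq (by positivity)] at h3
  rw [ge_iff_le, div_le_iff₀ (by positivity)]
  nlinarith [h1, hΔ]
end
end

section
/- (Characterization of pure intelligent states.) Let h be self-adjoint on a finite-dimensional Hilbert space and φ a unit vector with (Δh)_φ > 0. If P_φ(t) = cos²((Δh)_φ t) for all t ∈ ℝ, then there exist vectors φ₁, φ₂ with hφᵢ = ωᵢφᵢ, ω₁ < ω₂, ‖φᵢ‖² = 1/2, and φ = φ₁ + φ₂. -/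
open scoped InnerProductSpace
open Complex Filter Asymptotics

noncomputable section

variable {H : Type*} [NormedAddCommGroup H] [InnerProductSpace ℂ H] [FiniteDimensional ℂ H]

/-! ### Auxiliary lemmas -/

lemma exp_apply_eigenvector' (A : H →L[ℂ] H) (v : H) (c : ℂ) (hv : A v = c • v) :
    NormedSpace.exp A v = Complex.exp c • v := by
  have hpow : ∀ n : ℕ, (A ^ n) v = c ^ n • v := by
    intro n
    induction n with
    | zero => simp
    | succ n ih =>
      rw [pow_succ, pow_succ]
      simp [ContinuousLinearMap.mul_apply, ih, hv, smul_smul, mul_comm]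
  have h1 : HasSum (fun n : ℕ => ((Nat.factorial n : ℂ))⁻¹ • A ^ n) (NormedSpace.exp A) :=
    NormedSpace.exp_series_hasSum_exp' A
  have h2 : HasSum (fun n : ℕ => (((Nat.factorial n : ℂ))⁻¹ • A ^ n) v)
      (NormedSpace.exp A v) := by
    have := (ContinuousLinearMap.apply ℂ H v).hasSum h1
    simpa using this
  have h3 : HasSum (fun n : ℕ => (((Nat.factorial n : ℂ))⁻¹ * c ^ n) • v)
      (Complex.exp c • v) := by
    have : HasSum (fun n : ℕ => ((Nat.factorial n : ℂ))⁻¹ • c ^ n) (NormedSpace.exp c) :=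
      NormedSpace.exp_series_hasSum_exp' c
    rw [← Complex.exp_eq_exp_ℂ] at this
    simpa [smul_smul] using this.smul_const v
  have heq : (fun n : ℕ => (((Nat.factorial n : ℂ))⁻¹ • A ^ n) v)
      = fun n : ℕ => (((Nat.factorial n : ℂ))⁻¹ * c ^ n) • v := by
    funext n; simp [hpow n, smul_smul]
  rw [heq] at h2
  exact h2.unique h3

lemma timeEv_eigen' (h : H →L[ℂ] H) (t : ℝ) (v : H) (lam : ℝ) (hv : h v = (lam : ℂ) • v) :
    timeEv h t v = Complex.exp ((-(lam * t) : ℝ) * Complex.I) • v := by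
  rw [timeEv, exp_apply_eigenvector' ((-(Complex.I * (t : ℂ))) • h) v
    ((-(Complex.I * (t : ℂ))) * lam)]
  · congr 2
    push_cast
    ring
  · rw [ContinuousLinearMap.smul_apply, hv, smul_smul]

lemma inner_timeEv' {n : ℕ} (h : H →L[ℂ] H) (φ : H) (b : OrthonormalBasis (Fin n) ℂ H)
    (lam : Fin n → ℝ) (hb : ∀ i, h (b i) = (lam i : ℂ) • b i) (t : ℝ) :
    ⟪φ, timeEv h t φ⟫_ℂ
      = ∑ j, (Complex.normSq (b.repr φ j) : ℂ) * Complex.exp ((-(lam j * t) : ℝ) * Complex.I) := by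
  have h1 : timeEv h t φ
      = ∑ i, (Complex.exp ((-(lam i * t) : ℝ) * Complex.I) * b.repr φ i) • b i := by
    conv_lhs => rw [← b.sum_repr φ]
    rw [map_sum]
    refine Finset.sum_congr rfl fun i _ => ?_
    rw [map_smul, timeEv_eigen' h t _ _ (hb i), smul_smul, mul_comm]
  rw [h1, inner_sum]
  refine Finset.sum_congr rfl fun j _ => ?_
  rw [inner_smul_right]
  have h2 : ⟪φ, b j⟫_ℂ = (starRingEnd ℂ) (b.repr φ j) := by
    rw [OrthonormalBasis.repr_apply_apply]
    exact (inner_conj_symm _ _).symm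
  rw [h2, Complex.normSq_eq_conj_mul_self]
  ring

lemma survP_eq' {n : ℕ} (h : H →L[ℂ] H) (φ : H) (b : OrthonormalBasis (Fin n) ℂ H)
    (lam : Fin n → ℝ) (hb : ∀ i, h (b i) = (lam i : ℂ) • b i) (t : ℝ) :
    survP h φ t = ∑ j, ∑ k, (Complex.normSq (b.repr φ j) * Complex.normSq (b.repr φ k))
      * Real.cos ((lam j - lam k) * t) := by
  set z := ⟪φ, timeEv h t φ⟫_ℂ with hz
  have hre : survP h φ t = (z * (starRingEnd ℂ) z).re := by
    rw [survP, Complex.sq_norm, Complex.mul_conj]; simp [hz]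
  rw [hre, hz, inner_timeEv' h φ b lam hb t, map_sum, Finset.sum_mul_sum]
  rw [Complex.re_sum]
  refine Finset.sum_congr rfl fun j _ => ?_
  rw [Complex.re_sum]
  refine Finset.sum_congr rfl fun k _ => ?_
  rw [map_mul, Complex.conj_ofReal, ← Complex.exp_conj]
  have hc : (starRingEnd ℂ) (((-(lam k * t) : ℝ)) * Complex.I) = ((lam k * t : ℝ)) * Complex.I := by
    simp [Complex.conj_ofReal]
  rw [hc]
  have e1 : Complex.exp ((-(lam j * t) : ℝ) * Complex.I) * Complex.exp ((lam k * t : ℝ) * Complex.I)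
      = Complex.exp (((lam k * t - lam j * t : ℝ)) * Complex.I) := by
    rw [← Complex.exp_add]
    congr 1
    push_cast
    ring
  have e2 : ((Complex.normSq (b.repr φ j) : ℂ) * Complex.exp ((-(lam j * t) : ℝ) * Complex.I)) *
      ((Complex.normSq (b.repr φ k) : ℂ) * Complex.exp ((lam k * t : ℝ) * Complex.I))
      = ((Complex.normSq (b.repr φ j) * Complex.normSq (b.repr φ k) : ℝ) : ℂ)
        * Complex.exp (((lam k * t - lam j * t : ℝ)) * Complex.I) := by
    rw [← e1]
    push_cast
    ring
  rw [e2, Complex.re_ofReal_mul, Complex.exp_ofReal_mul_I_re]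
  rw [show lam k * t - lam j * t = -((lam j - lam k) * t) by ring, Real.cos_neg]

lemma iter_cos_two' : iteratedDeriv 2 Real.cos = fun x => -Real.cos x := by
  rw [iteratedDeriv_succ, iteratedDeriv_one, Real.deriv_cos']
  funext x
  rw [deriv.fun_neg]
  simp [Real.deriv_sin]

lemma iter_cos_three' : iteratedDeriv 3 Real.cos = fun x => Real.sin x := by
  rw [show (3:ℕ) = 2+1 from rfl, iteratedDeriv_succ, iter_cos_two']
  funext x
  rw [deriv.fun_neg]
  simp [Real.deriv_cos]

lemma iter_cos_four' : iteratedDeriv 4 Real.cos = Real.cos := by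
  rw [show (4:ℕ) = 3+1 from rfl, iteratedDeriv_succ, iter_cos_three']
  funext x
  simp [Real.deriv_sin]

lemma iter_cos_five' : iteratedDeriv 5 Real.cos = fun x => -Real.sin x := by
  rw [show (5:ℕ) = 4+1 from rfl, iteratedDeriv_succ, iter_cos_four', Real.deriv_cos']

lemma iter_cos_six' : iteratedDeriv 6 Real.cos = fun x => -Real.cos x := by
  rw [show (6:ℕ) = 5+1 from rfl, iteratedDeriv_succ, iter_cos_five']
  funext x
  rw [deriv.fun_neg]
  simp [Real.deriv_sin]

lemma contDiff_cos_mul' (ω : ℝ) (N : ℕ) : ContDiff ℝ N (fun t : ℝ => Real.cos (ω * t)) :=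
  Real.contDiff_cos.comp (contDiff_const.mul contDiff_id)

lemma iteratedDeriv_cos_sum' {ι : Type*} (s : Finset ι) (a ω : ι → ℝ) (N : ℕ)
    (hz : ∀ t : ℝ, ∑ i ∈ s, a i * Real.cos (ω i * t) = 0) :
    ∑ i ∈ s, a i * (ω i) ^ N * iteratedDeriv N Real.cos 0 = 0 := by
  have h1 : ∀ i : ι, iteratedDeriv N (fun t => a i * Real.cos (ω i * t)) 0
      = a i * (ω i) ^ N * iteratedDeriv N Real.cos 0 := by
    intro i
    have hc : ContDiffOn ℝ N (fun t : ℝ => Real.cos (ω i * t)) Set.univ :=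
      (contDiff_cos_mul' (ω i) N).contDiffOn
    rw [← iteratedDerivWithin_univ,
      iteratedDerivWithin_const_mul (Set.mem_univ (0:ℝ)) uniqueDiffOn_univ (a i) (hc 0 (Set.mem_univ 0)),
      iteratedDerivWithin_univ]
    rw [iteratedDeriv_comp_const_mul Real.contDiff_cos (ω i)]
    simp [mul_assoc]
  have h2 : iteratedDeriv N (fun t => ∑ i ∈ s, a i * Real.cos (ω i * t)) 0
      = ∑ i ∈ s, iteratedDeriv N (fun t => a i * Real.cos (ω i * t)) 0 := by
    rw [iteratedDeriv_eq_iteratedFDeriv]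
    have hfun : (fun t => ∑ i ∈ s, a i * Real.cos (ω i * t))
        = (∑ i ∈ s, (fun t => a i * Real.cos (ω i * t)) ·) := by
      funext t; simp
    rw [hfun, iteratedFDeriv_sum (fun i _ => contDiff_const.mul (contDiff_cos_mul' (ω i) N))]
    simp [iteratedDeriv_eq_iteratedFDeriv]
  have h3 : (fun t : ℝ => ∑ i ∈ s, a i * Real.cos (ω i * t)) = fun _ => (0:ℝ) := funext hz
  rw [← Finset.sum_congr rfl (fun i _ => h1 i), ← h2, h3,
    iteratedDeriv_eq_iteratedFDeriv, iteratedFDeriv_zero_fun]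
  simp

lemma cos_sum_pow' {ι : Type*} (s : Finset ι) (a ω : ι → ℝ)
    (hz : ∀ t : ℝ, ∑ i ∈ s, a i * Real.cos (ω i * t) = 0) (N : ℕ) (e : ℝ)
    (he : iteratedDeriv N Real.cos 0 = e) (he0 : e ≠ 0) :
    ∑ i ∈ s, a i * (ω i) ^ N = 0 := by
  have h := iteratedDeriv_cos_sum' s a ω N hz
  rw [he, ← Finset.sum_mul] at h
  exact (mul_eq_zero.mp h).resolve_right he0
set_option maxHeartbeats 1600000 in
theorem stmt11 (h : H →L[ℂ] H) (hsa : IsSelfAdjoint h) (φ : H) (hφ : ‖φ‖ = 1)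
    (hΔ : 0 < Real.sqrt (varVec h φ))
    (hsat : ∀ t : ℝ, survP h φ t = Real.cos (Real.sqrt (varVec h φ) * t) ^ 2) :
    ∃ (ω₁ ω₂ : ℝ) (φ₁ φ₂ : H), ω₁ < ω₂
      ∧ h φ₁ = (ω₁ : ℂ) • φ₁ ∧ h φ₂ = (ω₂ : ℂ) • φ₂
      ∧ ‖φ₁‖ ^ 2 = 1 / 2 ∧ ‖φ₂‖ ^ 2 = 1 / 2 ∧ φ = φ₁ + φ₂ := by
  classical
  set Δ := Real.sqrt (varVec h φ) with hΔdef
  have hΔpos : 0 < Δ := hΔ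
  -- spectral decomposition
  have hsym : (h : H →ₗ[ℂ] H).IsSymmetric := hsa.isSymmetric
  set n := Module.finrank ℂ H with hn
  have hfr : Module.finrank ℂ H = n := rfl
  set b := hsym.eigenvectorBasis hfr with hbdef
  set lam := hsym.eigenvalues hfr with hlamdef
  have hb : ∀ i, h (b i) = ((lam i : ℝ) : ℂ) • b i := by
    intro i
    have h1 := hsym.apply_eigenvectorBasis hfr i
    simp only [ContinuousLinearMap.coe_coe] at h1
    exact h1
  set c := fun i => b.repr φ i with hcdef
  set p := fun i => Complex.normSq (c i) with hpdef
  have hp0 : ∀ i, 0 ≤ p i := fun i => Complex.normSq_nonneg _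
  -- the survival probability identity as a trig sum
  have hS : ∀ t : ℝ, ∑ x : Fin n × Fin n, (p x.1 * p x.2) * Real.cos ((lam x.1 - lam x.2) * t)
      = Real.cos (Δ * t) ^ 2 := by
    intro t
    rw [Fintype.sum_prod_type]
    rw [← survP_eq' h φ b lam hb t]
    exact hsat t
  -- combined family
  have hz : ∀ t : ℝ,
      ∑ i : (Fin n × Fin n) ⊕ (Fin 2),
        (Sum.elim (fun x => p x.1 * p x.2) (fun _ => -(1/2)) i) *
          Real.cos ((Sum.elim (fun x => lam x.1 - lam x.2)
            (fun m : Fin 2 => (m.val : ℝ) * (2*Δ)) i) * t) = 0 := by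
    intro t
    rw [Fintype.sum_sum_type, Fin.sum_univ_two]
    simp only [Sum.elim_inl, Sum.elim_inr, Fin.val_zero, Fin.val_one, Nat.cast_zero,
      Nat.cast_one, zero_mul, one_mul, Real.cos_zero, mul_one]
    rw [hS t, Real.cos_sq]
    ring_nf
  -- moments
  have moment : ∀ (N : ℕ) (e : ℝ), iteratedDeriv N Real.cos 0 = e → e ≠ 0 →
      ∑ x : Fin n × Fin n, (p x.1 * p x.2) * (lam x.1 - lam x.2) ^ N
        = (1/2) * (0:ℝ)^N + (1/2) * (2*Δ)^N := by
    intro N e he he0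
    have hm := cos_sum_pow' Finset.univ _ _ (hz) N e he he0
    rw [Fintype.sum_sum_type, Fin.sum_univ_two] at hm
    simp only [Sum.elim_inl, Sum.elim_inr, Fin.val_zero, Fin.val_one, Nat.cast_zero,
      Nat.cast_one, zero_mul, one_mul] at hm
    linarith [hm]
  have hcos0 : Real.cos 0 = 1 := Real.cos_zero
  have e2 : ∑ x : Fin n × Fin n, (p x.1 * p x.2) * (lam x.1 - lam x.2) ^ 2 = 2 * Δ^2 := by
    have := moment 2 (-1) (by rw [iter_cos_two']; simp) (by norm_num)
    rw [this]; ring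
  have e4 : ∑ x : Fin n × Fin n, (p x.1 * p x.2) * (lam x.1 - lam x.2) ^ 4 = 8 * Δ^4 := by
    have := moment 4 1 (by rw [iter_cos_four']; simp) (by norm_num)
    rw [this]; ring
  have e6 : ∑ x : Fin n × Fin n, (p x.1 * p x.2) * (lam x.1 - lam x.2) ^ 6 = 32 * Δ^6 := by
    have := moment 6 (-1) (by rw [iter_cos_six']; simp) (by norm_num)
    rw [this]; ring
  -- key pointwise identity
  have key : ∀ x : Fin n × Fin n,
      (p x.1 * p x.2) * (lam x.1 - lam x.2)^2 * ((lam x.1 - lam x.2)^2 - 4*Δ^2)^2 = 0 := by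
    have hsum0 : ∑ x : Fin n × Fin n,
        (p x.1 * p x.2) * (lam x.1 - lam x.2)^2 * ((lam x.1 - lam x.2)^2 - 4*Δ^2)^2 = 0 := by
      have hterm : ∀ x : Fin n × Fin n,
          (p x.1 * p x.2) * (lam x.1 - lam x.2)^2 * ((lam x.1 - lam x.2)^2 - 4*Δ^2)^2
          = ((p x.1 * p x.2) * (lam x.1 - lam x.2)^6)
            - 8*Δ^2 * ((p x.1 * p x.2) * (lam x.1 - lam x.2)^4)
            + 16*Δ^4 * ((p x.1 * p x.2) * (lam x.1 - lam x.2)^2) := by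
        intro x; ring
      rw [Finset.sum_congr rfl (fun x _ => hterm x)]
      rw [Finset.sum_add_distrib, Finset.sum_sub_distrib, ← Finset.mul_sum, ← Finset.mul_sum,
        e2, e4, e6]
      ring
    intro x
    have hnn : ∀ x : Fin n × Fin n, x ∈ Finset.univ →
        0 ≤ (p x.1 * p x.2) * (lam x.1 - lam x.2)^2 * ((lam x.1 - lam x.2)^2 - 4*Δ^2)^2 := by
      intro x _
      have := hp0 x.1; have := hp0 x.2
      positivity
    exact (Finset.sum_eq_zero_iff_of_nonneg hnn).mp hsum0 x (Finset.mem_univ x)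
  -- find a pair with distinct eigenvalues in the support
  have hex : ∃ j k : Fin n, p j ≠ 0 ∧ p k ≠ 0 ∧ lam j < lam k := by
    by_contra hcon
    push_neg at hcon
    have hz2 : ∀ x : Fin n × Fin n, (p x.1 * p x.2) * (lam x.1 - lam x.2) ^ 2 = 0 := by
      intro x
      by_cases h1 : p x.1 = 0
      · simp [h1]
      by_cases h2 : p x.2 = 0
      · simp [h2]
      have ha := hcon x.1 x.2 h1 h2
      have hb2 := hcon x.2 x.1 h2 h1
      have : lam x.1 = lam x.2 := le_antisymm hb2 ha
      simp [this]
    have : (0:ℝ) = 2*Δ^2 := by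
      rw [← e2, Finset.sum_congr rfl (fun x _ => hz2 x), Finset.sum_const, smul_zero]
    nlinarith [hΔpos]
  obtain ⟨j₀, k₀, hpj₀, hpk₀, hlt₀⟩ := hex
  set ω₁ := lam j₀ with hω₁
  set ω₂ := lam k₀ with hω₂
  -- gap is 2Δ
  have hgap : ω₂ = ω₁ + 2*Δ := by
    have hk := key (j₀, k₀)
    simp only at hk
    have hd2 : (ω₁ - ω₂)^2 ≠ 0 := by
      have : ω₁ - ω₂ ≠ 0 := by intro hc; rw [sub_eq_zero] at hc; exact absurd hc (ne_of_lt hlt₀)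
      positivity
    have hpp : p j₀ * p k₀ ≠ 0 := mul_ne_zero hpj₀ hpk₀
    have h4 : ((ω₁ - ω₂)^2 - 4*Δ^2)^2 = 0 := by
      rcases mul_eq_zero.mp hk with h' | h'
      · rcases mul_eq_zero.mp h' with h'' | h''
        · exact absurd h'' hpp
        · exact absurd h'' hd2
      · exact h'
    have h5 : (ω₁ - ω₂)^2 = 4*Δ^2 := by
      have := pow_eq_zero_iff (n := 2) (by norm_num) |>.mp h4
      linarith [sub_eq_zero.mp this]
    have h6 : (ω₂ - ω₁ - 2*Δ) * (ω₂ - ω₁ + 2*Δ) = 0 := by linear_combination h5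
    rcases mul_eq_zero.mp h6 with h' | h'
    · linarith
    · linarith [hlt₀, hΔpos]
  -- classification of eigenvalues in the support
  have hclass : ∀ i, p i ≠ 0 → lam i = ω₁ ∨ lam i = ω₂ := by
    intro i hi
    have k1 := key (i, j₀)
    have k2 := key (i, k₀)
    simp only at k1 k2
    have hp1 : p i * p j₀ ≠ 0 := mul_ne_zero hi hpj₀
    have hp2 : p i * p k₀ ≠ 0 := mul_ne_zero hi hpk₀
    have c1 : lam i = ω₁ ∨ (lam i - ω₁)^2 = 4*Δ^2 := by
      rcases mul_eq_zero.mp k1 with h' | h'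
      · rcases mul_eq_zero.mp h' with h'' | h''
        · exact absurd h'' hp1
        · left
          have := pow_eq_zero_iff (n := 2) (by norm_num) |>.mp h''
          linarith [sub_eq_zero.mp this]
      · right
        have := pow_eq_zero_iff (n := 2) (by norm_num) |>.mp h'
        linarith [sub_eq_zero.mp this]
    have c2 : lam i = ω₂ ∨ (lam i - ω₂)^2 = 4*Δ^2 := by
      rcases mul_eq_zero.mp k2 with h' | h'
      · rcases mul_eq_zero.mp h' with h'' | h''
        · exact absurd h'' hp2
        · left
          have := pow_eq_zero_iff (n := 2) (by norm_num) |>.mp h''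
          linarith [sub_eq_zero.mp this]
      · right
        have := pow_eq_zero_iff (n := 2) (by norm_num) |>.mp h'
        linarith [sub_eq_zero.mp this]
    rcases c1 with c1 | c1
    · exact Or.inl c1
    rcases c2 with c2 | c2
    · exact Or.inr c2
    -- both squared conditions: contradiction unless lam i = ω₂ (covered) : derive lam i = ω₂
    exfalso
    rw [hgap] at c2
    have hdiff : 4*Δ*(lam i - ω₁ - Δ) = 0 := by linear_combination c1 - c2
    have hΔne : (4:ℝ)*Δ ≠ 0 := by positivity
    have hx : lam i = ω₁ + Δ := by
      rcases mul_eq_zero.mp hdiff with h' | h'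
      · exact absurd h' hΔne
      · linarith
    rw [hx] at c1
    nlinarith [hΔpos]
  -- total probability one
  have hφsq : ∑ i, p i = 1 := by
    have h0 := hS 0
    simp only [mul_zero, Real.cos_zero, mul_one, one_pow] at h0
    rw [Fintype.sum_prod_type] at h0
    have hsq : (∑ i, p i) * (∑ i, p i) = 1 := by rw [Finset.sum_mul_sum]; exact h0
    have hnn : 0 ≤ ∑ i, p i := Finset.sum_nonneg (fun i _ => hp0 i)
    have hfac : (∑ i, p i - 1) * (∑ i, p i + 1) = 0 := by linear_combination hsq
    rcases mul_eq_zero.mp hfac with h' | h'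
    · linarith
    · linarith
  set T₁ := Finset.univ.filter (fun i => c i ≠ 0 ∧ lam i = ω₁) with hT₁
  set T₂ := Finset.univ.filter (fun i => c i ≠ 0 ∧ lam i = ω₂) with hT₂
  have hlam1 : ∀ i ∈ T₁, lam i = ω₁ := fun i hi => (Finset.mem_filter.mp hi).2.2
  have hlam2 : ∀ i ∈ T₂, lam i = ω₂ := fun i hi => (Finset.mem_filter.mp hi).2.2
  have hdisj : Disjoint T₁ T₂ := by
    rw [Finset.disjoint_left]
    intro i h1 h2
    have e1 := (Finset.mem_filter.mp h1).2.2
    have e2' := (Finset.mem_filter.mp h2).2.2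
    rw [e1] at e2'
    exact absurd e2' (ne_of_lt hlt₀)
  have hmem : ∀ i, i ∉ T₁ ∪ T₂ → c i = 0 := by
    intro i hi
    by_contra hc
    have hpne : p i ≠ 0 := fun h0 => hc (Complex.normSq_eq_zero.mp h0)
    rcases hclass i hpne with h' | h'
    · exact hi (Finset.mem_union_left _ (Finset.mem_filter.mpr ⟨Finset.mem_univ i, hc, h'⟩))
    · exact hi (Finset.mem_union_right _ (Finset.mem_filter.mpr ⟨Finset.mem_univ i, hc, h'⟩))
  have hres : ∀ f : Fin n → ℝ, (∀ i, c i = 0 → f i = 0) → ∑ i, f i = ∑ i ∈ T₁ ∪ T₂, f i := by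
    intro f hf
    symm
    apply Finset.sum_subset (Finset.subset_univ _)
    intro i _ hi
    exact hf i (hmem i hi)
  set P := ∑ i ∈ T₁, p i with hPdef
  set Q := ∑ i ∈ T₂, p i with hQdef
  have hPQ : P + Q = 1 := by
    rw [hPdef, hQdef, ← Finset.sum_union hdisj,
      ← hres p (fun i hci => by simp [hpdef, hci])]
    exact hφsq
  -- restrict e2
  have e2' : ∑ x : Fin n × Fin n, (p x.1 * p x.2) * (lam x.1 - lam x.2) ^ 2
      = 8 * P * Q * Δ^2 := by
    rw [Fintype.sum_prod_type]
    rw [hres (fun j => ∑ k, (p j * p k) * (lam j - lam k)^2)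
      (fun j hj => Finset.sum_eq_zero fun k _ => by simp [hpdef, hj])]
    rw [Finset.sum_congr rfl (fun j _ =>
      hres (fun k => (p j * p k) * (lam j - lam k)^2) (fun k hk => by simp [hpdef, hk]))]
    rw [Finset.sum_union hdisj]
    simp only [Finset.sum_union hdisj]
    rw [Finset.sum_add_distrib, Finset.sum_add_distrib]
    have S11 : ∑ j ∈ T₁, ∑ k ∈ T₁, (p j * p k) * (lam j - lam k)^2 = 0 :=
      Finset.sum_eq_zero fun j hj => Finset.sum_eq_zero fun k hk => by
        rw [hlam1 j hj, hlam1 k hk]; ring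
    have S22 : ∑ j ∈ T₂, ∑ k ∈ T₂, (p j * p k) * (lam j - lam k)^2 = 0 :=
      Finset.sum_eq_zero fun j hj => Finset.sum_eq_zero fun k hk => by
        rw [hlam2 j hj, hlam2 k hk]; ring
    have S12 : ∑ j ∈ T₁, ∑ k ∈ T₂, (p j * p k) * (lam j - lam k)^2 = P * (Q * (4 * Δ^2)) := by
      rw [Finset.sum_congr rfl (fun j hj => show
          ∑ k ∈ T₂, (p j * p k) * (lam j - lam k)^2 = p j * (Q * (4 * Δ^2)) from by
        rw [Finset.sum_congr rfl (fun k hk => show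
            (p j * p k) * (lam j - lam k)^2 = p j * (p k * (4 * Δ^2)) from by
          rw [hlam1 j hj, hlam2 k hk, hgap]; ring)]
        rw [← Finset.mul_sum, ← Finset.sum_mul])]
      rw [← Finset.sum_mul]
    have S21 : ∑ j ∈ T₂, ∑ k ∈ T₁, (p j * p k) * (lam j - lam k)^2 = Q * (P * (4 * Δ^2)) := by
      rw [Finset.sum_congr rfl (fun j hj => show
          ∑ k ∈ T₁, (p j * p k) * (lam j - lam k)^2 = p j * (P * (4 * Δ^2)) from by
        rw [Finset.sum_congr rfl (fun k hk => show
            (p j * p k) * (lam j - lam k)^2 = p j * (p k * (4 * Δ^2)) from by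
          rw [hlam2 j hj, hlam1 k hk, hgap]; ring)]
        rw [← Finset.mul_sum, ← Finset.sum_mul])]
      rw [← Finset.sum_mul]
    rw [S11, S22, S12, S21]
    ring
  have hPQ4 : P * Q = 1/4 := by
    have he := e2
    rw [e2'] at he
    have hΔ2 : 0 < Δ^2 := by positivity
    have : (P * Q - 1/4) * (8 * Δ^2) = 0 := by linear_combination he
    rcases mul_eq_zero.mp this with h' | h'
    · linarith
    · nlinarith [hΔ2]
  have hPhalf : P = 1/2 := by
    have hsq0 : (P - 1/2)^2 = 0 := by linear_combination -hPQ4 + P * hPQ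
    have := pow_eq_zero_iff (n := 2) (by norm_num) |>.mp hsq0
    linarith [sub_eq_zero.mp this]
  have hQhalf : Q = 1/2 := by linarith [hPQ, hPhalf]
  -- the eigenvectors
  set φ₁ := ∑ i ∈ T₁, c i • b i with hφ₁def
  set φ₂ := ∑ i ∈ T₂, c i • b i with hφ₂def
  have hnorm : ∀ (T : Finset (Fin n)), ‖∑ i ∈ T, c i • b i‖^2 = ∑ i ∈ T, p i := by
    intro T
    have hin : ⟪∑ i ∈ T, c i • b i, ∑ i ∈ T, c i • b i⟫_ℂ
        = ∑ i ∈ T, (starRingEnd ℂ) (c i) * c i := b.orthonormal.inner_sum c c T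
    have h2 : ‖∑ i ∈ T, c i • b i‖^2 = (⟪∑ i ∈ T, c i • b i, ∑ i ∈ T, c i • b i⟫_ℂ).re := by
      have := inner_self_eq_norm_sq (𝕜 := ℂ) (∑ i ∈ T, c i • b i)
      simpa using this.symm
    rw [h2, hin, Complex.re_sum]
    refine Finset.sum_congr rfl fun i _ => ?_
    rw [← Complex.normSq_eq_conj_mul_self, Complex.ofReal_re]
  refine ⟨ω₁, ω₂, φ₁, φ₂, hlt₀, ?_, ?_, ?_, ?_, ?_⟩
  · rw [hφ₁def, map_sum, Finset.smul_sum]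
    refine Finset.sum_congr rfl fun i hi => ?_
    rw [map_smul, hb i, hlam1 i hi, smul_smul, smul_smul, mul_comm]
  · rw [hφ₂def, map_sum, Finset.smul_sum]
    refine Finset.sum_congr rfl fun i hi => ?_
    rw [map_smul, hb i, hlam2 i hi, smul_smul, smul_smul, mul_comm]
  · rw [hφ₁def, hnorm T₁, ← hPdef, hPhalf]
  · rw [hφ₂def, hnorm T₂, ← hQdef, hQhalf]
  · have hrepr : φ = ∑ i, c i • b i := (b.sum_repr φ).symm
    have hcut : ∑ i, c i • b i = ∑ i ∈ T₁ ∪ T₂, c i • b i := by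
      symm
      apply Finset.sum_subset (Finset.subset_univ _)
      intro i _ hi
      rw [hmem i hi, zero_smul]
    rw [hrepr, hcut, Finset.sum_union hdisj]
end
end

section
/- (Dichotomy for pure state decay.) Let h be self-adjoint on a finite-dimensional Hilbert space and φ a unit vector with (Δh)_φ > 0. Then exactly one of the following holds: (i) P_φ(t) > cos²((Δh)_φ t) for all t with 0 < (Δh)_φ |t| ≤ π/2, or (ii) P_φ(t) = cos²((Δh)_φ t) for all t ∈ ℝ. -/
open scoped InnerProductSpace
open Complex Filter Asymptotics

noncomputable section

variable {H : Type*} [NormedAddCommGroup H] [InnerProductSpace ℂ H] [FiniteDimensional ℂ H]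

/-! ### Auxiliary real-analysis lemmas -/

open Real Set in
lemma aux_mul_cos_lt_sin {u : ℝ} (h0 : 0 < u) (h1 : u < π) : Real.cos u * u < Real.sin u := by
  rcases lt_or_ge u (π/2) with h | h
  · have hc : 0 < Real.cos u := Real.cos_pos_of_mem_Ioo ⟨by linarith [Real.pi_pos], h⟩
    have ht := Real.lt_tan h0 h
    rw [Real.tan_eq_sin_div_cos, lt_div_iff₀ hc] at ht
    linarith [ht]
  · have hc : Real.cos u ≤ 0 := Real.cos_nonpos_of_pi_div_two_le_of_le h (by linarith)
    have hs : 0 < Real.sin u := Real.sin_pos_of_pos_of_lt_pi h0 h1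
    nlinarith

open Real Set in
lemma aux_sinDiv_strictAnti : StrictAntiOn (fun u => Real.sin u / u) (Ioc 0 π) := by
  apply strictAntiOn_of_deriv_neg (convex_Ioc 0 π)
  · exact ContinuousOn.div (Real.continuous_sin.continuousOn) continuousOn_id
      (fun x hx => ne_of_gt hx.1)
  · intro u hu
    rw [interior_Ioc] at hu
    have hne : u ≠ 0 := ne_of_gt hu.1
    have hd : HasDerivAt (fun u => Real.sin u / u)
        ((Real.cos u * u - Real.sin u * 1) / u ^ 2) u :=
      (Real.hasDerivAt_sin u).div (hasDerivAt_id u) hne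
    rw [hd.deriv]
    have := aux_mul_cos_lt_sin hu.1 hu.2
    apply div_neg_of_neg_of_pos (by linarith) (by positivity)

open Real Set in
lemma aux_sinDiv_ge {s : ℝ} (h0 : 0 < s) (h1 : s ≤ π/2) : 2/π ≤ Real.sin s / s := by
  have hπ := Real.pi_pos
  have heq : (2:ℝ)/π = 1/(π/2) := by field_simp
  rcases eq_or_lt_of_le h1 with h | h
  · rw [h, Real.sin_pi_div_two, one_div_div]
  · have h2 := aux_sinDiv_strictAnti ⟨h0, by linarith⟩ ⟨by linarith, by linarith⟩ h
    simp only [Real.sin_pi_div_two] at h2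
    rw [heq]; exact le_of_lt h2

open Real Set in
/-- The key support-line inequality. -/
lemma aux_support_line_strict {s u : ℝ} (hs0 : 0 < s) (hs1 : s ≤ π/2) (hu : 0 ≤ u)
    (hne : u ≠ s) :
    Real.cos s - Real.sin s / (2*s) * (u^2 - s^2) < Real.cos u := by
  have hπ := Real.pi_pos
  set c : ℝ := Real.sin s / (2*s) with hc
  set F : ℝ → ℝ := fun u => Real.cos u + c * u^2 with hF
  have hderiv : ∀ x : ℝ, HasDerivAt F (-Real.sin x + c * (2*x)) x := by
    intro x
    have h1 : HasDerivAt (fun y : ℝ => y^2) (2*x) x := by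
      simpa using hasDerivAt_pow 2 x
    exact (Real.hasDerivAt_cos x).add (h1.const_mul c)
  have hsin_s_pos : 0 < Real.sin s := Real.sin_pos_of_pos_of_lt_pi hs0 (by linarith)
  have hanti : StrictAntiOn F (Icc 0 s) := by
    apply strictAntiOn_of_deriv_neg (convex_Icc 0 s)
    · exact (Real.continuous_cos.add (continuous_const.mul (continuous_pow 2))).continuousOn
    · intro x hx
      rw [interior_Icc] at hx
      rw [(hderiv x).deriv]
      have h2 := aux_sinDiv_strictAnti ⟨hx.1, by linarith [hx.2]⟩ ⟨hs0, by linarith⟩ hx.2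
      have hx0 := hx.1
      have : Real.sin s / s * x < Real.sin x := by
        have h3 := (div_lt_div_iff₀ hs0 hx0).mp h2
        rw [div_mul_eq_mul_div, div_lt_iff₀ hs0]
        linarith
      have hcx : c * (2*x) = Real.sin s / s * x := by
        rw [hc]; field_simp
      rw [hcx]; linarith
  have hmono : StrictMonoOn F (Ici s) := by
    apply strictMonoOn_of_deriv_pos (convex_Ici s)
    · exact (Real.continuous_cos.add (continuous_const.mul (continuous_pow 2))).continuousOn
    · intro x hx
      rw [interior_Ici] at hx
      rw [(hderiv x).deriv]
      have hx0 : 0 < x := lt_trans hs0 hx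
      have key : Real.sin x < Real.sin s / s * x := by
        rcases le_or_gt x π with hxπ | hxπ
        · have h2 := aux_sinDiv_strictAnti ⟨hs0, by linarith⟩ ⟨hx0, hxπ⟩ hx
          have h3 := (div_lt_div_iff₀ hx0 hs0).mp h2
          rw [div_mul_eq_mul_div, lt_div_iff₀ hs0]; linarith
        · have h3 : 2/π ≤ Real.sin s / s := aux_sinDiv_ge hs0 hs1
          have : 2/π * x ≤ Real.sin s / s * x := by nlinarith
          have h4 : (2:ℝ) < 2/π * x := by
            rw [div_mul_eq_mul_div, lt_div_iff₀ hπ]; nlinarith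
          have h5 := Real.sin_le_one x
          linarith
      have hcx : c * (2*x) = Real.sin s / s * x := by
        rw [hc]; field_simp
      rw [hcx]; linarith
  have hFs : F s < F u := by
    rcases lt_or_gt_of_ne hne with h | h
    · exact hanti ⟨hu, le_of_lt h⟩ ⟨hs0.le, le_refl s⟩ h
    · exact hmono (le_refl s) (le_of_lt h) h
  simp only [hF] at hFs
  nlinarith [hFs]

open Real Set in
lemma aux_support_line_le {s u : ℝ} (hs0 : 0 < s) (hs1 : s ≤ π/2) (hu : 0 ≤ u) :
    Real.cos s - Real.sin s / (2*s) * (u^2 - s^2) ≤ Real.cos u := by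
  rcases eq_or_ne u s with rfl | hne
  · simp
  · exact (aux_support_line_strict hs0 hs1 hu hne).le

open Real Set in
lemma aux_real_dichotomy {n : ℕ} (p ω : Fin n → ℝ) (hp : ∀ i, 0 ≤ p i)
    (hp1 : ∑ i, p i = 1) (hω0 : ∑ i, p i * ω i = 0) {Δ : ℝ} (hΔ : 0 < Δ)
    (hV : ∑ i, p i * ω i ^ 2 = Δ ^ 2) :
    Xor'
      (∀ t : ℝ, 0 < Δ * |t| → Δ * |t| ≤ π/2 →
        (∑ i, p i * Real.cos (ω i * t))^2 + (∑ i, p i * Real.sin (ω i * t))^2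
          > Real.cos (Δ*t)^2)
      (∀ t : ℝ, (∑ i, p i * Real.cos (ω i * t))^2 + (∑ i, p i * Real.sin (ω i * t))^2
          = Real.cos (Δ*t)^2) := by
  set C : ℝ → ℝ := fun t => ∑ i, p i * Real.cos (ω i * t) with hC
  set S : ℝ → ℝ := fun t => ∑ i, p i * Real.sin (ω i * t) with hS
  have main : ∀ t : ℝ, 0 < Δ * |t| → Δ * |t| ≤ π/2 →
      Real.cos (Δ*t) ≤ C t ∧
      (C t = Real.cos (Δ*t) → ∀ i, p i = 0 ∨ ω i = Δ ∨ ω i = -Δ) := by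
    intro t ht1 ht2
    have ht0 : t ≠ 0 := by
      intro h; rw [h] at ht1; simp at ht1
    have htabs : 0 < |t| := abs_pos.mpr ht0
    set s : ℝ := Δ * |t| with hs
    have hs0 : 0 < s := ht1
    have habs' : Δ * |t| = |Δ * t| := by rw [abs_mul, abs_of_pos hΔ]
    have hcos_eq : Real.cos s = Real.cos (Δ*t) := by
      rw [hs, habs', Real.cos_abs]
    set c : ℝ := Real.sin s / (2*s) with hc
    have hterm : ∀ i, p i * (Real.cos s - c * ((ω i * t)^2 - s^2)) ≤ p i * Real.cos (ω i * t) := by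
      intro i
      apply mul_le_mul_of_nonneg_left _ (hp i)
      have h1 := aux_support_line_le hs0 ht2 (abs_nonneg (ω i * t))
      rw [_root_.sq_abs, Real.cos_abs, ← hc] at h1
      exact h1
    have hsum_eq : ∑ i, p i * (Real.cos s - c * ((ω i * t)^2 - s^2)) = Real.cos s := by
      have h1 : ∀ i ∈ Finset.univ, p i * (Real.cos s - c * ((ω i * t)^2 - s^2))
          = (Real.cos s + c * s^2) * p i - (c * t^2) * (p i * ω i ^ 2) := by
        intro i _; ring
      rw [Finset.sum_congr rfl h1, Finset.sum_sub_distrib, ← Finset.mul_sum, ← Finset.mul_sum,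
        hp1, hV]
      have hssq : s^2 = Δ^2 * t^2 := by rw [hs]; rw [mul_pow, _root_.sq_abs]
      rw [hssq]; ring
    have hle : Real.cos (Δ*t) ≤ C t := by
      rw [← hcos_eq, ← hsum_eq]
      exact Finset.sum_le_sum (fun i _ => hterm i)
    refine ⟨hle, ?_⟩
    intro heq i
    rcases eq_or_lt_of_le (hp i) with hpi | hpi
    · exact Or.inl hpi.symm
    right
    have hz : ∑ i, (p i * Real.cos (ω i * t) - p i * (Real.cos s - c * ((ω i * t)^2 - s^2))) = 0 := by
      have hsum_eq' : C t = ∑ i, p i * Real.cos (ω i * t) := rfl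
      rw [Finset.sum_sub_distrib, hsum_eq, hcos_eq, ← hsum_eq', heq, sub_self]
    have hall := (Finset.sum_eq_zero_iff_of_nonneg
      (fun i _ => sub_nonneg.mpr (hterm i))).mp hz i (Finset.mem_univ i)
    have heqi : Real.cos (ω i * t) = Real.cos s - c * ((ω i * t)^2 - s^2) := by
      have h2 := sub_eq_zero.mp hall
      exact mul_left_cancel₀ (ne_of_gt hpi) h2
    have huabs : |ω i * t| = s := by
      by_contra hne
      have := aux_support_line_strict hs0 ht2 (abs_nonneg (ω i * t)) hne
      rw [_root_.sq_abs, Real.cos_abs, ← hc] at this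
      linarith [heqi, this]
    have : |ω i| = Δ := by
      rw [abs_mul, hs] at huabs
      exact mul_right_cancel₀ (ne_of_gt htabs) huabs
    rcases abs_eq hΔ.le |>.mp this with h | h
    · exact Or.inl h
    · exact Or.inr h
  have hPge : ∀ t : ℝ, 0 < Δ * |t| → Δ * |t| ≤ π/2 →
      Real.cos (Δ*t)^2 ≤ C t ^2 + S t ^2 ∧
      (C t ^2 + S t ^2 = Real.cos (Δ*t)^2 → C t = Real.cos (Δ*t)) := by
    intro t ht1 ht2
    obtain ⟨hle, _⟩ := main t ht1 ht2
    have hcos0 : 0 ≤ Real.cos (Δ*t) := by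
      have : Real.cos (Δ*|t|) = Real.cos (Δ*t) := by
        rw [show Δ * |t| = |Δ * t| by rw [abs_mul, abs_of_pos hΔ], Real.cos_abs]
      rw [← this]
      exact Real.cos_nonneg_of_mem_Icc ⟨by linarith [ht1, Real.pi_pos], ht2⟩
    constructor
    · nlinarith [sq_nonneg (S t)]
    · intro heq
      nlinarith [sq_nonneg (S t), sq_nonneg (C t - Real.cos (Δ*t))]
  have hstruct : (∃ t : ℝ, (0 < Δ * |t| ∧ Δ * |t| ≤ π/2) ∧
      C t ^2 + S t ^2 = Real.cos (Δ*t)^2) →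
      ∀ t : ℝ, C t ^2 + S t ^2 = Real.cos (Δ*t)^2 := by
    rintro ⟨t₀, ⟨hw1, hw2⟩, heq⟩ t
    have hCeq := (hPge t₀ hw1 hw2).2 heq
    have hclass := (main t₀ hw1 hw2).2 hCeq
    have hCt : C t = Real.cos (Δ*t) := by
      have h1 : ∀ i ∈ Finset.univ, p i * Real.cos (ω i * t) = Real.cos (Δ*t) * p i := by
        intro i _
        rcases hclass i with h | h | h
        · rw [h]; ring
        · rw [h]; ring
        · rw [h, neg_mul, Real.cos_neg]; ring
      show (∑ i, p i * Real.cos (ω i * t)) = _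
      rw [Finset.sum_congr rfl h1, ← Finset.mul_sum, hp1, mul_one]
    have hSt : S t = 0 := by
      have h1 : ∀ i ∈ Finset.univ, p i * Real.sin (ω i * t) = (Real.sin (Δ*t)/Δ) * (p i * ω i) := by
        intro i _
        rcases hclass i with h | h | h
        · rw [h]; ring
        · rw [h]; field_simp; try ring
        · rw [h, neg_mul, Real.sin_neg]; field_simp; try ring
      show (∑ i, p i * Real.sin (ω i * t)) = _
      rw [Finset.sum_congr rfl h1, ← Finset.mul_sum, hω0, mul_zero]
    rw [hCt, hSt]; ring
  by_cases hB : ∀ t : ℝ, C t ^2 + S t ^2 = Real.cos (Δ*t)^2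
  · refine Or.inr ⟨hB, ?_⟩
    intro hA
    have hw1 : 0 < Δ * |π/(2*Δ)| := by
      rw [abs_of_pos (by positivity)]
      positivity
    have hw2 : Δ * |π/(2*Δ)| ≤ π/2 := by
      rw [abs_of_pos (by positivity)]
      apply le_of_eq
      field_simp
    have := hA (π/(2*Δ)) hw1 hw2
    rw [hB (π/(2*Δ))] at this
    exact lt_irrefl _ this
  · refine Or.inl ⟨?_, hB⟩
    intro t ht1 ht2
    rcases eq_or_lt_of_le ((hPge t ht1 ht2).1) with heq | hlt
    · exact absurd (hstruct ⟨t, ⟨ht1, ht2⟩, heq.symm⟩) hB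
    · exact hlt

/-! ### Operator-theoretic lemmas -/

lemma aux_timeEv_apply_eigen (h : H →L[ℂ] H) (t : ℝ) (v : H) (lam : ℝ)
    (hv : h v = (lam : ℂ) • v) :
    timeEv h t v = Complex.exp (-(Complex.I * t * lam)) • v := by
  set μ : ℂ := -(Complex.I * t * lam) with hμ
  set A : H →L[ℂ] H := (-(Complex.I * (t:ℂ))) • h with hA
  have hAv : A v = μ • v := by
    rw [hA, ContinuousLinearMap.smul_apply, hv, smul_smul, hμ]; ring_nf
  have hAn : ∀ m : ℕ, (A ^ m) v = μ ^ m • v := by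
    intro m; induction m with
    | zero => simp
    | succ k ih =>
      rw [pow_succ, ContinuousLinearMap.mul_apply, hAv, map_smul, ih, smul_smul]
      congr 1; ring
  have hsum : Summable fun m : ℕ => ((m.factorial : ℂ))⁻¹ • A ^ m := NormedSpace.expSeries_summable' A
  have happ : timeEv h t v = ∑' m : ℕ, (((m.factorial : ℂ))⁻¹ • A ^ m) v := by
    rw [timeEv, NormedSpace.exp_eq_tsum (𝕂 := ℂ)]
    exact ((ContinuousLinearMap.apply ℂ H v).map_tsum hsum)
  rw [happ]
  have h2 : ∀ m : ℕ, (((m.factorial : ℂ))⁻¹ • A ^ m) v = (((m.factorial : ℂ))⁻¹ * μ ^ m) • v := by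
    intro m; rw [ContinuousLinearMap.smul_apply, hAn, smul_smul]
  have hμsum : Summable fun m : ℕ => ((m.factorial : ℂ))⁻¹ * μ ^ m := by
    simpa [smul_eq_mul] using NormedSpace.expSeries_summable' (𝕂 := ℂ) μ
  rw [tsum_congr h2, hμsum.tsum_smul_const]
  congr 1
  rw [Complex.exp_eq_exp_ℂ, NormedSpace.exp_eq_tsum (𝕂 := ℂ)]
  simp [smul_eq_mul]

lemma aux_exp_neg_I_mul (x : ℝ) :
    Complex.exp (-(Complex.I * x)) = ((Real.cos x : ℂ)) - (Real.sin x : ℂ) * Complex.I := by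
  rw [show -(Complex.I * (x:ℂ)) = (((-x : ℝ)) : ℂ) * Complex.I by push_cast; ring,
    Complex.exp_mul_I]
  rw [show Complex.cos (((-x : ℝ)) : ℂ) = ((Real.cos x : ℂ)) by
      rw [← Complex.ofReal_cos, Real.cos_neg],
    show Complex.sin (((-x : ℝ)) : ℂ) = -((Real.sin x : ℂ)) by
      rw [← Complex.ofReal_sin, Real.sin_neg, Complex.ofReal_neg]]
  ring

theorem stmt12 (h : H →L[ℂ] H) (hsa : IsSelfAdjoint h) (φ : H) (hφ : ‖φ‖ = 1)
    (hΔ : 0 < Real.sqrt (varVec h φ)) :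
    Xor'
      (∀ t : ℝ, 0 < Real.sqrt (varVec h φ) * |t| → Real.sqrt (varVec h φ) * |t| ≤ Real.pi / 2 →
        survP h φ t > Real.cos (Real.sqrt (varVec h φ) * t) ^ 2)
      (∀ t : ℝ, survP h φ t = Real.cos (Real.sqrt (varVec h φ) * t) ^ 2) := by
  classical
  have hsym : (↑h : H →ₗ[ℂ] H).IsSymmetric := hsa.isSymmetric
  set b : OrthonormalBasis (Fin (Module.finrank ℂ H)) ℂ H := hsym.eigenvectorBasis rfl with hb
  set E : Fin (Module.finrank ℂ H) → ℝ := hsym.eigenvalues rfl with hEdef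
  have hEig : ∀ i, h (b i) = (E i : ℂ) • b i := fun i => hsym.apply_eigenvectorBasis rfl i
  set r : Fin (Module.finrank ℂ H) → ℂ := fun i => b.repr φ i with hr
  set p : Fin (Module.finrank ℂ H) → ℝ := fun i => Complex.normSq (r i) with hpdef
  have hp : ∀ i, 0 ≤ p i := fun i => Complex.normSq_nonneg _
  have hφsum : φ = ∑ i, r i • b i := (b.sum_repr φ).symm
  have hinner : ∀ (w : Fin (Module.finrank ℂ H) → ℂ),
      ⟪φ, ∑ i, w i • b i⟫_ℂ = ∑ i, w i * (starRingEnd ℂ) (r i) := by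
    intro w
    rw [inner_sum]
    refine Finset.sum_congr rfl fun i _ => ?_
    rw [inner_smul_right, ← inner_conj_symm, ← b.repr_apply_apply]
  have hmc : ∀ i, r i * (starRingEnd ℂ) (r i) = ((p i : ℝ) : ℂ) := by
    intro i; rw [Complex.mul_conj]
  have hsum1 : ∑ i, p i = 1 := by
    have h1 : ⟪φ, φ⟫_ℂ = ∑ i, r i * (starRingEnd ℂ) (r i) := by
      have h0 := hinner r
      rw [← hφsum] at h0
      exact h0
    have h2 : ⟪φ, φ⟫_ℂ = 1 := by
      rw [inner_self_eq_norm_sq_to_K, hφ]; norm_num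
    rw [h2] at h1
    have h3 : (1 : ℂ) = ((∑ i, p i : ℝ) : ℂ) := by
      rw [h1]; push_cast
      exact Finset.sum_congr rfl fun i _ => hmc i
    exact_mod_cast h3.symm
  -- expectation value
  have hhφ : h φ = ∑ i, (r i * (E i : ℂ)) • b i := by
    conv_lhs => rw [hφsum]
    rw [map_sum]
    exact Finset.sum_congr rfl fun i _ => by rw [map_smul, hEig i, smul_smul]
  have hμform : ⟪φ, h φ⟫_ℂ = ((∑ i, p i * E i : ℝ) : ℂ) := by
    rw [hhφ, hinner]
    push_cast
    refine Finset.sum_congr rfl fun i _ => ?_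
    rw [show r i * (E i : ℂ) * (starRingEnd ℂ) (r i)
        = r i * (starRingEnd ℂ) (r i) * (E i : ℂ) by ring, hmc i]
  set μ : ℝ := ∑ i, p i * E i with hμdef
  have hexpVec : expVec h φ = μ := by
    rw [expVec, hμform, Complex.ofReal_re]
  -- second moment
  have hhhφ : h (h φ) = ∑ i, (r i * (E i : ℂ) * (E i : ℂ)) • b i := by
    rw [hhφ, map_sum]
    exact Finset.sum_congr rfl fun i _ => by rw [map_smul, hEig i, smul_smul]
  have hm2form : ⟪φ, h (h φ)⟫_ℂ = ((∑ i, p i * E i ^ 2 : ℝ) : ℂ) := by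
    rw [hhhφ, hinner]
    push_cast
    refine Finset.sum_congr rfl fun i _ => ?_
    rw [show r i * (E i : ℂ) * (E i : ℂ) * (starRingEnd ℂ) (r i)
        = r i * (starRingEnd ℂ) (r i) * ((E i : ℂ) * (E i : ℂ)) by ring, hmc i]
    ring
  have hvar : varVec h φ = ∑ i, p i * E i ^ 2 - μ ^ 2 := by
    rw [varVec, hm2form, Complex.ofReal_re, hexpVec]
  -- centered frequencies
  set ω : Fin (Module.finrank ℂ H) → ℝ := fun i => E i - μ with hωdef
  have hω0 : ∑ i, p i * ω i = 0 := by
    have h1 : ∀ i ∈ Finset.univ, p i * ω i = p i * E i - μ * p i := by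
      intro i _; rw [hωdef]; ring
    rw [Finset.sum_congr rfl h1, Finset.sum_sub_distrib, ← Finset.mul_sum, hsum1, ← hμdef]
    ring
  set Δ : ℝ := Real.sqrt (varVec h φ) with hΔdef
  have hvarpos : 0 < varVec h φ := Real.sqrt_pos.mp hΔ
  have hΔsq : Δ ^ 2 = varVec h φ := Real.sq_sqrt hvarpos.le
  have hVω : ∑ i, p i * ω i ^ 2 = Δ ^ 2 := by
    have h1 : ∀ i ∈ Finset.univ, p i * ω i ^ 2
        = p i * E i ^ 2 - (2*μ) * (p i * E i) + μ^2 * p i := by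
      intro i _; rw [hωdef]; ring
    rw [Finset.sum_congr rfl h1, hΔsq, hvar]
    rw [Finset.sum_add_distrib, Finset.sum_sub_distrib, ← Finset.mul_sum, ← Finset.mul_sum,
      hsum1, ← hμdef]
    ring
  -- survival probability formula
  have hsurv : ∀ t : ℝ, survP h φ t
      = (∑ i, p i * Real.cos (ω i * t))^2 + (∑ i, p i * Real.sin (ω i * t))^2 := by
    intro t
    have hU : timeEv h t φ = ∑ i, (r i * Complex.exp (-(Complex.I * t * E i))) • b i := by
      conv_lhs => rw [hφsum]
      rw [map_sum]
      exact Finset.sum_congr rfl fun i _ => by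
        rw [map_smul, aux_timeEv_apply_eigen h t (b i) (E i) (hEig i), smul_smul]
    have hat : ⟪φ, timeEv h t φ⟫_ℂ
        = ∑ i, ((p i : ℝ) : ℂ) * Complex.exp (-(Complex.I * t * E i)) := by
      rw [hU, hinner]
      refine Finset.sum_congr rfl fun i _ => ?_
      rw [show r i * Complex.exp (-(Complex.I * t * E i)) * (starRingEnd ℂ) (r i)
          = r i * (starRingEnd ℂ) (r i) * Complex.exp (-(Complex.I * t * E i)) by ring, hmc i]
    have hsplit : ∀ i, Complex.exp (-(Complex.I * t * E i))
        = Complex.exp (-(Complex.I * ((t * μ : ℝ) : ℂ))) * Complex.exp (-(Complex.I * ((ω i * t : ℝ) : ℂ))) := by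
      intro i
      rw [← Complex.exp_add]
      congr 1
      rw [hωdef]
      push_cast
      ring
    set z : ℂ := ∑ i, ((p i : ℝ) : ℂ) * Complex.exp (-(Complex.I * ((ω i * t : ℝ) : ℂ))) with hz
    have hat2 : ⟪φ, timeEv h t φ⟫_ℂ = Complex.exp (-(Complex.I * ((t * μ : ℝ) : ℂ))) * z := by
      rw [hat, hz, Finset.mul_sum]
      refine Finset.sum_congr rfl fun i _ => ?_
      rw [hsplit i]; ring
    have habs1 : ‖Complex.exp (-(Complex.I * ((t * μ : ℝ) : ℂ)))‖ = 1 := by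
      rw [Complex.norm_exp]
      simp
    have hzre : z.re = ∑ i, p i * Real.cos (ω i * t) := by
      rw [hz]
      rw [Complex.re_sum]
      refine Finset.sum_congr rfl fun i _ => ?_
      rw [aux_exp_neg_I_mul (ω i * t)]
      simp only [Complex.mul_re, Complex.mul_im, Complex.sub_re, Complex.sub_im,
        Complex.ofReal_re, Complex.ofReal_im, Complex.I_re, Complex.I_im]
      ring
    have hzim : z.im = -∑ i, p i * Real.sin (ω i * t) := by
      rw [hz, Complex.im_sum, ← Finset.sum_neg_distrib]
      refine Finset.sum_congr rfl fun i _ => ?_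
      rw [aux_exp_neg_I_mul (ω i * t)]
      simp only [Complex.mul_re, Complex.mul_im, Complex.sub_re, Complex.sub_im,
        Complex.ofReal_re, Complex.ofReal_im, Complex.I_re, Complex.I_im]
      ring
    have : survP h φ t = z.re^2 + z.im^2 := by
      rw [survP, hat2, norm_mul, habs1, one_mul, Complex.sq_norm, Complex.normSq_apply]
      ring
    rw [this, hzre, hzim]
    ring
  simp only [hsurv]
  exact aux_real_dichotomy p ω hp hsum1 hω0 hΔ hVω
end
end

section
/- Let ρ = Σₖ λₖ |ψₖ⟩⟨ψₖ| be a density operator (ψₖ orthonormal, λₖ > 0), Π the projection onto the range of ρ, h self-adjoint, and P_ρ(t) = Tr(Π e^{−iht} ρ e^{iht}). Then the second derivative of P_ρ at t = 0 satisfies −P″_ρ(0)/2 = Σₖ λₖ (Δh)²_{ψₖ} − Σ_{k≠l} λₗ |⟨ψₖ, hψₗ⟩|². -/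
open scoped InnerProductSpace
open Complex Filter Asymptotics

noncomputable section

variable {H : Type*} [NormedAddCommGroup H] [InnerProductSpace ℂ H] [FiniteDimensional ℂ H]

set_option linter.unusedSectionVars false
set_option maxHeartbeats 1000000

/-! ### Auxiliary definitions and lemmas -/

def Afun (h : H →L[ℂ] H) : H →L[ℂ] H := (-Complex.I) • h
def Efun (h : H →L[ℂ] H) (t : ℝ) : H →L[ℂ] H := NormedSpace.exp (t • Afun h)
def gf (h : H →L[ℂ] H) (x y : H) (t : ℝ) : ℂ := ⟪x, Efun h t y⟫_ℂ
def gf1 (h : H →L[ℂ] H) (x y : H) (t : ℝ) : ℂ := ⟪x, (Efun h t * Afun h) y⟫_ℂ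
def gf2 (h : H →L[ℂ] H) (x y : H) (t : ℝ) : ℂ := ⟪x, (Efun h t * Afun h * Afun h) y⟫_ℂ
def Ff (h : H →L[ℂ] H) (x y : H) (t : ℝ) : ℝ := Complex.normSq (gf h x y t)
def Ff1 (h : H →L[ℂ] H) (x y : H) (t : ℝ) : ℝ :=
  2 * ((gf h x y t).re * (gf1 h x y t).re + (gf h x y t).im * (gf1 h x y t).im)

lemma timeEv_eq (h : H →L[ℂ] H) (t : ℝ) : timeEv h t = Efun h t := by
  rw [timeEv, Efun, Afun, ← smul_assoc]
  congr 1
  simp [Complex.real_smul]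
  ring

def trL : (H →L[ℂ] H) →ₗ[ℂ] ℂ := (LinearMap.trace ℂ H).comp (ContinuousLinearMap.coeLM ℂ)

lemma tr_eq_trL (A : H →L[ℂ] H) : tr A = trL A := rfl

lemma tr_ketbra (φ ψ : H) : tr (ketbra φ ψ) = ⟪ψ, φ⟫_ℂ := by
  have h1 : (ketbra φ ψ).toLinearMap
      = dualTensorHom ℂ H H (((innerSL ℂ ψ).toLinearMap : H →ₗ[ℂ] ℂ) ⊗ₜ[ℂ] φ) := by
    ext x; simp [ketbra]
  rw [tr, h1, LinearMap.trace_eq_contract_apply, contractLeft_apply]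
  rfl

lemma ketbra_comp_ketbra (a b c d : H) :
    ketbra a b ∘L ketbra c d = ⟪b, c⟫_ℂ • ketbra a d := by
  ext x; simp [ketbra, smul_smul]; ring

lemma comp_ketbra (A : H →L[ℂ] H) (a b : H) : A ∘L ketbra a b = ketbra (A a) b := by
  ext x; simp [ketbra]

lemma ketbra_comp (A : H →L[ℂ] H) (a b : H) :
    ketbra a b ∘L A = ketbra a (ContinuousLinearMap.adjoint A b) := by
  ext x; simp [ketbra, ContinuousLinearMap.adjoint_inner_left]

lemma star_timeEv (h : H →L[ℂ] H) (hsa : IsSelfAdjoint h) (t : ℝ) :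
    star (timeEv h t) = timeEv h (-t) := by
  rw [timeEv, timeEv, NormedSpace.star_exp, star_smul, hsa.star_eq]
  congr 1
  simp

lemma surv_eq {n : ℕ} (h ρ : H →L[ℂ] H) (hsa : IsSelfAdjoint h)
    (ψ : Fin n → H) (lam : Fin n → ℝ)
    (hρ : ρ = ∑ k, (lam k : ℂ) • ketbra (ψ k) (ψ k))
    (Pr : H →L[ℂ] H) (hPr : Pr = ∑ k, ketbra (ψ k) (ψ k)) (t : ℝ) :
    survPMix h ρ Pr t
      = ∑ k, ∑ l, lam l * Complex.normSq ⟪ψ k, timeEv h t (ψ l)⟫_ℂ := by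
  have step1 : ρ ∘L timeEv h (-t) = ∑ l, (lam l : ℂ) • ketbra (ψ l) (timeEv h t (ψ l)) := by
    rw [hρ, ContinuousLinearMap.finset_sum_comp]
    refine Finset.sum_congr rfl fun l _ => ?_
    rw [ContinuousLinearMap.smul_comp, ketbra_comp, ← ContinuousLinearMap.star_eq_adjoint,
      star_timeEv h hsa, neg_neg]
  have step2 : timeEv h t ∘L (ρ ∘L timeEv h (-t))
      = ∑ l, (lam l : ℂ) • ketbra (timeEv h t (ψ l)) (timeEv h t (ψ l)) := by
    rw [step1, ContinuousLinearMap.comp_finset_sum]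
    exact Finset.sum_congr rfl fun l _ => by
      rw [ContinuousLinearMap.comp_smul, comp_ketbra]
  have step3 : Pr ∘L timeEv h t ∘L ρ ∘L timeEv h (-t)
      = ∑ k, ∑ l, ((lam l : ℂ) * ⟪ψ k, timeEv h t (ψ l)⟫_ℂ)
          • ketbra (ψ k) (timeEv h t (ψ l)) := by
    rw [step2, hPr, ContinuousLinearMap.finset_sum_comp]
    refine Finset.sum_congr rfl fun k _ => ?_
    rw [ContinuousLinearMap.comp_finset_sum]
    refine Finset.sum_congr rfl fun l _ => ?_
    rw [ContinuousLinearMap.comp_smul, ketbra_comp_ketbra, smul_smul, mul_comm]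
  rw [survPMix, step3, tr_eq_trL, map_sum]
  rw [Complex.re_sum]
  refine Finset.sum_congr rfl fun k _ => ?_
  rw [map_sum, Complex.re_sum]
  refine Finset.sum_congr rfl fun l _ => ?_
  rw [map_smul, ← tr_eq_trL, tr_ketbra, smul_eq_mul, mul_assoc]
  have hc : ⟪timeEv h t (ψ l), ψ k⟫_ℂ = (starRingEnd ℂ) ⟪ψ k, timeEv h t (ψ l)⟫_ℂ :=
    (inner_conj_symm _ _).symm
  rw [hc, Complex.mul_conj, ← Complex.ofReal_mul]
  exact Complex.ofReal_re _

lemma clm_hasDerivAt {X Y : Type*} [NormedAddCommGroup X] [NormedSpace ℂ X]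
    [NormedAddCommGroup Y] [NormedSpace ℂ Y] {f : ℝ → X} {f' : X} {t : ℝ}
    (hf : HasDerivAt f f' t) (L : X →L[ℂ] Y) :
    HasDerivAt (fun s => L (f s)) (L f') t := by
  exact (L.restrictScalars ℝ).hasFDerivAt.comp_hasDerivAt t hf

lemma hasDerivAt_Efun (h : H →L[ℂ] H) (t : ℝ) :
    HasDerivAt (Efun h) (Efun h t * Afun h) t :=
  hasDerivAt_exp_smul_const (Afun h) t

lemma hasDerivAt_gf (h : H →L[ℂ] H) (x y : H) (t : ℝ) :
    HasDerivAt (gf h x y) (gf1 h x y t) t :=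
  clm_hasDerivAt (hasDerivAt_Efun h t)
    ((innerSL ℂ x).comp (ContinuousLinearMap.apply ℂ H y))

lemma hasDerivAt_gf1 (h : H →L[ℂ] H) (x y : H) (t : ℝ) :
    HasDerivAt (gf1 h x y) (gf2 h x y t) t :=
  clm_hasDerivAt ((hasDerivAt_Efun h t).mul_const (Afun h))
    ((innerSL ℂ x).comp (ContinuousLinearMap.apply ℂ H y))

lemma hasDerivAt_Ff (h : H →L[ℂ] H) (x y : H) (t : ℝ) :
    HasDerivAt (Ff h x y) (Ff1 h x y t) t := by
  have hre : HasDerivAt (fun s => (gf h x y s).re) ((gf1 h x y t).re) t := by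
    exact Complex.reCLM.hasFDerivAt.comp_hasDerivAt t (hasDerivAt_gf h x y t)
  have him : HasDerivAt (fun s => (gf h x y s).im) ((gf1 h x y t).im) t := by
    exact Complex.imCLM.hasFDerivAt.comp_hasDerivAt t (hasDerivAt_gf h x y t)
  have h2 : HasDerivAt (fun s => (gf h x y s).re * (gf h x y s).re
      + (gf h x y s).im * (gf h x y s).im) (Ff1 h x y t) t := by
    have := (hre.fun_mul hre).fun_add (him.fun_mul him)
    refine this.congr_deriv ?_
    rw [Ff1]; ring
  have hfun : Ff h x y = fun s => (gf h x y s).re * (gf h x y s).re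
      + (gf h x y s).im * (gf h x y s).im := by
    funext s; rw [Ff, Complex.normSq_apply]
  rw [hfun]
  exact h2

lemma hasDerivAt_Ff1 (h : H →L[ℂ] H) (x y : H) (t : ℝ) :
    HasDerivAt (Ff1 h x y)
      (2 * ((gf1 h x y t).re ^ 2 + (gf1 h x y t).im ^ 2
        + (gf h x y t).re * (gf2 h x y t).re + (gf h x y t).im * (gf2 h x y t).im)) t := by
  have hre : HasDerivAt (fun s => (gf h x y s).re) ((gf1 h x y t).re) t := by
    exact Complex.reCLM.hasFDerivAt.comp_hasDerivAt t (hasDerivAt_gf h x y t)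
  have him : HasDerivAt (fun s => (gf h x y s).im) ((gf1 h x y t).im) t := by
    exact Complex.imCLM.hasFDerivAt.comp_hasDerivAt t (hasDerivAt_gf h x y t)
  have hre1 : HasDerivAt (fun s => (gf1 h x y s).re) ((gf2 h x y t).re) t := by
    exact Complex.reCLM.hasFDerivAt.comp_hasDerivAt t (hasDerivAt_gf1 h x y t)
  have him1 : HasDerivAt (fun s => (gf1 h x y s).im) ((gf2 h x y t).im) t := by
    exact Complex.imCLM.hasFDerivAt.comp_hasDerivAt t (hasDerivAt_gf1 h x y t)
  have := (((hre.fun_mul hre1).fun_add (him.fun_mul him1)).const_mul (2:ℝ))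
  refine this.congr_deriv ?_
  ring

lemma Efun_zero (h : H →L[ℂ] H) : Efun h 0 = 1 := by
  rw [Efun, zero_smul, NormedSpace.exp_zero]

lemma gf_zero (h : H →L[ℂ] H) (x y : H) : gf h x y 0 = ⟪x, y⟫_ℂ := by
  rw [gf, Efun_zero]; rfl

lemma gf1_zero (h : H →L[ℂ] H) (x y : H) : gf1 h x y 0 = -(Complex.I * ⟪x, h y⟫_ℂ) := by
  rw [gf1, Efun_zero, one_mul, Afun]
  simp [inner_smul_right]

lemma gf2_zero (h : H →L[ℂ] H) (x y : H) : gf2 h x y 0 = -⟪x, h (h y)⟫_ℂ := by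
  rw [gf2, Efun_zero, one_mul, Afun]
  simp [ContinuousLinearMap.mul_apply, inner_smul_right, map_smul, smul_smul]

lemma inner_hself_im (h : H →L[ℂ] H) (hsa : IsSelfAdjoint h) (x : H) :
    (⟪x, h x⟫_ℂ).im = 0 := by
  rw [← Complex.conj_eq_iff_im, inner_conj_symm]
  nth_rewrite 1 [← hsa.adjoint_eq]
  exact ContinuousLinearMap.adjoint_inner_left h x x

theorem stmt15 {n : ℕ} (h ρ : H →L[ℂ] H) (hsa : IsSelfAdjoint h)
    (ψ : Fin n → H) (hon : Orthonormal ℂ ψ)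
    (lam : Fin n → ℝ) (hpos : ∀ k, 0 < lam k) (hsum : ∑ k, lam k = 1)
    (hρ : ρ = ∑ k, (lam k : ℂ) • ketbra (ψ k) (ψ k))
    (Pr : H →L[ℂ] H) (hPr : Pr = ∑ k, ketbra (ψ k) (ψ k)) :
    -(deriv (deriv (survPMix h ρ Pr)) 0) / 2
      = ∑ k, lam k * varVec h (ψ k)
        - ∑ k, ∑ l, (if k = l then 0 else lam l * ‖⟪ψ k, h (ψ l)⟫_ℂ‖ ^ 2) := by
  classical
  -- step 1: survPMix as a sum of |g|^2
  have hsurv : survPMix h ρ Pr = fun t => ∑ k, ∑ l, lam l * Ff h (ψ k) (ψ l) t := by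
    funext t
    rw [surv_eq h ρ hsa ψ lam hρ Pr hPr t]
    refine Finset.sum_congr rfl fun k _ => Finset.sum_congr rfl fun l _ => ?_
    rw [Ff, gf, timeEv_eq]
  -- step 2: first derivative
  have hd1 : deriv (survPMix h ρ Pr) = fun t => ∑ k, ∑ l, lam l * Ff1 h (ψ k) (ψ l) t := by
    funext t
    rw [hsurv]
    exact HasDerivAt.deriv (HasDerivAt.fun_sum fun k _ => HasDerivAt.fun_sum fun l _ =>
      (hasDerivAt_Ff h (ψ k) (ψ l) t).const_mul (lam l))
  -- step 3: second derivative at 0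
  have hd2 : deriv (deriv (survPMix h ρ Pr)) 0
      = ∑ k, ∑ l, lam l * (2 * ((gf1 h (ψ k) (ψ l) 0).re ^ 2 + (gf1 h (ψ k) (ψ l) 0).im ^ 2
        + (gf h (ψ k) (ψ l) 0).re * (gf2 h (ψ k) (ψ l) 0).re
        + (gf h (ψ k) (ψ l) 0).im * (gf2 h (ψ k) (ψ l) 0).im)) := by
    rw [hd1]
    exact HasDerivAt.deriv (HasDerivAt.fun_sum fun k _ => HasDerivAt.fun_sum fun l _ =>
      (hasDerivAt_Ff1 h (ψ k) (ψ l) 0).const_mul (lam l))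
  -- step 4: evaluate at 0
  have hon' := orthonormal_iff_ite.mp hon
  have hval : ∀ k l : Fin n,
      lam l * (2 * ((gf1 h (ψ k) (ψ l) 0).re ^ 2 + (gf1 h (ψ k) (ψ l) 0).im ^ 2
        + (gf h (ψ k) (ψ l) 0).re * (gf2 h (ψ k) (ψ l) 0).re
        + (gf h (ψ k) (ψ l) 0).im * (gf2 h (ψ k) (ψ l) 0).im))
      = -2 * ((if k = l then lam l * varVec h (ψ l) else 0)
          - (if k = l then 0 else lam l * ‖⟪ψ k, h (ψ l)⟫_ℂ‖ ^ 2)) := by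
    intro k l
    have hg := gf_zero h (ψ k) (ψ l)
    have hg1 := gf1_zero h (ψ k) (ψ l)
    have hg2 := gf2_zero h (ψ k) (ψ l)
    rw [hg, hg1, hg2, hon' k l]
    by_cases hkl : k = l
    · subst hkl
      simp only [if_pos rfl]
      have him := inner_hself_im h hsa (ψ k)
      have habs : ‖⟪ψ k, h (ψ k)⟫_ℂ‖ ^ 2 = Complex.normSq ⟪ψ k, h (ψ k)⟫_ℂ :=
        Complex.sq_norm _
      rw [varVec, expVec]
      simp [Complex.normSq_apply, him]
      ring
    · simp only [if_neg hkl]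
      have habs : ‖⟪ψ k, h (ψ l)⟫_ℂ‖ ^ 2 = Complex.normSq ⟪ψ k, h (ψ l)⟫_ℂ :=
        Complex.sq_norm _
      rw [habs]
      simp [Complex.normSq_apply]
      ring
  -- step 5: assemble
  have hsum1 : (∑ k, lam k * varVec h (ψ k))
      = ∑ k, ∑ l, (if k = l then lam l * varVec h (ψ l) else 0) := by
    refine Finset.sum_congr rfl fun k _ => ?_
    rw [Finset.sum_ite_eq, if_pos (Finset.mem_univ k)]
  rw [hd2, Finset.sum_congr rfl fun k _ => Finset.sum_congr rfl fun l _ => hval k l, hsum1]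
  rw [← Finset.sum_sub_distrib]
  simp_rw [← Finset.sum_sub_distrib, ← Finset.mul_sum]
  ring
end
end

section
/- (Mixed intelligent states.) Let ω₁ < ω₂ be eigenvalues of a self-adjoint operator h on a finite-dimensional Hilbert space, and suppose ψₖ = φ_{k,1} + φ_{k,2} for k = 1,…,n with hφ_{k,ε} = ω_ε φ_{k,ε} and ⟨φ_{k,ε}, φ_{l,η}⟩ = (1/2) δ_{kl} δ_{εη}. Let ρ = Σₖ λₖ |ψₖ⟩⟨ψₖ| with λₖ > 0 and Σₖ λₖ = 1, and Π = Σₖ |ψₖ⟩⟨ψₖ|. Then Tr(Π e^{−iht} ρ e^{iht}) = cos²((Δh)_ρ t) for all t ∈ ℝ, with (Δh)_ρ = (ω₂ − ω₁)/2. -/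
open scoped InnerProductSpace
open Complex Filter Asymptotics

noncomputable section

variable {H : Type*} [NormedAddCommGroup H] [InnerProductSpace ℂ H] [FiniteDimensional ℂ H]

set_option linter.unusedSectionVars false

lemma ketbra_apply' (φ ψ x : H) : ketbra φ ψ x = ⟪ψ, x⟫_ℂ • φ := rfl

lemma tr_comp_comm (A B : H →L[ℂ] H) : tr (A ∘L B) = tr (B ∘L A) := by
  simp only [tr, ContinuousLinearMap.coe_comp]
  exact LinearMap.trace_comp_comm' _ _

lemma tr_sum {ι : Type*} (s : Finset ι) (A : ι → H →L[ℂ] H) :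
    tr (∑ k ∈ s, A k) = ∑ k ∈ s, tr (A k) := by
  simp_rw [tr_eq_trL]; exact map_sum trL A s

lemma tr_smul (c : ℂ) (A : H →L[ℂ] H) : tr (c • A) = c * tr A := by
  simp_rw [tr_eq_trL]; rw [map_smul]; rfl

lemma exp_apply_eigen_s19 {H : Type*} [NormedAddCommGroup H] [InnerProductSpace ℂ H]
    [CompleteSpace H] (T : H →L[ℂ] H) (c : ℂ) (φ : H) (hφ : T φ = c • φ) :
    NormedSpace.exp T φ = Complex.exp c • φ := by
  have hpow : ∀ m : ℕ, (T ^ m) φ = c ^ m • φ := by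
    intro m
    induction m with
    | zero => simp
    | succ m ih =>
      rw [pow_succ, pow_succ, ContinuousLinearMap.mul_apply, hφ, map_smul, ih, smul_smul,
        mul_comm]
  have hsum : Summable fun m : ℕ => (((Nat.factorial m : ℂ)⁻¹) • T ^ m) :=
    NormedSpace.expSeries_summable' T
  have h1 : NormedSpace.exp T φ = ∑' m : ℕ, (((Nat.factorial m : ℂ)⁻¹) • T ^ m) φ := by
    rw [NormedSpace.exp_eq_tsum (𝕂 := ℂ)]
    exact ((ContinuousLinearMap.apply ℂ H φ).map_tsum hsum)
  rw [h1]
  have h2 : ∀ m : ℕ, (((Nat.factorial m : ℂ)⁻¹) • T ^ m) φ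
      = (((Nat.factorial m : ℂ)⁻¹) • c ^ m) • φ := by
    intro m
    simp [hpow m, smul_smul]
  simp_rw [h2]
  rw [(NormedSpace.expSeries_summable' c).tsum_smul_const, Complex.exp_eq_exp_ℂ,
    NormedSpace.exp_eq_tsum (𝕂 := ℂ)]

lemma key_re (a b : ℝ) :
    (((cexp ((a : ℂ) * I) + cexp ((b : ℂ) * I)) / 2) *
      ((cexp (((-a : ℝ) : ℂ) * I) + cexp (((-b : ℝ) : ℂ) * I)) / 2)).re
      = (1 + Real.cos (b - a)) / 2 := by
  have hconj : (cexp (((-a : ℝ) : ℂ) * I) + cexp (((-b : ℝ) : ℂ) * I)) / 2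
      = (starRingEnd ℂ) ((cexp ((a : ℂ) * I) + cexp ((b : ℂ) * I)) / 2) := by
    rw [map_div₀, map_add, ← Complex.exp_conj, ← Complex.exp_conj]
    have h2 : (starRingEnd ℂ) 2 = 2 := Complex.conj_ofNat 2
    rw [h2]
    simp [Complex.conj_ofReal, Complex.conj_I]
  rw [hconj, Complex.mul_conj, Complex.ofReal_re, Complex.normSq_apply]
  have hd : ((cexp ((a:ℂ)*I) + cexp ((b:ℂ)*I)) / 2)
      = ((cexp ((a:ℂ)*I) + cexp ((b:ℂ)*I)) / ((2:ℝ):ℂ)) := by norm_num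
  rw [hd, Complex.div_ofReal_re, Complex.div_ofReal_im]
  simp only [Complex.add_re, Complex.add_im, Complex.exp_ofReal_mul_I_re,
    Complex.exp_ofReal_mul_I_im]
  have hab := Real.cos_sub b a
  have ha := Real.sin_sq_add_cos_sq a
  have hb := Real.sin_sq_add_cos_sq b
  nlinarith [ha, hb, hab]

theorem stmt19 {n : ℕ} (h ρ : H →L[ℂ] H) (hsa : IsSelfAdjoint h)
    (ω₁ ω₂ : ℝ) (hω : ω₁ < ω₂)
    (φv : Fin n → Fin 2 → H)
    (heig1 : ∀ k, h (φv k 0) = (ω₁ : ℂ) • φv k 0)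
    (heig2 : ∀ k, h (φv k 1) = (ω₂ : ℂ) • φv k 1)
    (hinner : ∀ k l ε η, ⟪φv k ε, φv l η⟫_ℂ = if k = l ∧ ε = η then (1 / 2 : ℂ) else 0)
    (ψ : Fin n → H) (hψ : ∀ k, ψ k = φv k 0 + φv k 1)
    (lam : Fin n → ℝ) (hpos : ∀ k, 0 < lam k) (hsum : ∑ k, lam k = 1)
    (hρ : ρ = ∑ k, (lam k : ℂ) • ketbra (ψ k) (ψ k))
    (Pr : H →L[ℂ] H) (hPr : Pr = ∑ k, ketbra (ψ k) (ψ k)) :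
    Real.sqrt (varMix h ρ) = (ω₂ - ω₁) / 2 ∧
      ∀ t : ℝ, survPMix h ρ Pr t = Real.cos (Real.sqrt (varMix h ρ) * t) ^ 2 := by
  classical
  have h01 : ((0 : Fin 2) = 1) = False := by simp
  have h10 : ((1 : Fin 2) = 0) = False := by simp
  have hsumC : ∑ k, (lam k : ℂ) = 1 := by
    push_cast [← hsum]; norm_cast
  have hhψ : ∀ k, h (ψ k) = (ω₁ : ℂ) • φv k 0 + (ω₂ : ℂ) • φv k 1 := by
    intro k; rw [hψ, map_add, heig1, heig2]
  have e1 : ∀ k, ⟪ψ k, h (ψ k)⟫_ℂ = ((ω₁ : ℂ) + ω₂) / 2 := by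
    intro k
    rw [hhψ, hψ]
    simp only [inner_add_left, inner_add_right, inner_smul_right, hinner, h01, h10,
      and_true, and_false, if_true, if_false, eq_self_iff_true]
    ring
  have e2 : ∀ k, ⟪ψ k, h (h (ψ k))⟫_ℂ = ((ω₁ : ℂ) ^ 2 + (ω₂ : ℂ) ^ 2) / 2 := by
    intro k
    have hh2 : h (h (ψ k)) = ((ω₁ : ℂ) ^ 2) • φv k 0 + ((ω₂ : ℂ) ^ 2) • φv k 1 := by
      rw [hhψ, map_add, map_smul, map_smul, heig1, heig2, smul_smul, smul_smul, ← sq, ← sq]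
    rw [hh2, hψ]
    simp only [inner_add_left, inner_add_right, inner_smul_right, hinner, h01, h10,
      and_true, and_false, if_true, if_false, eq_self_iff_true]
    ring
  have hop1 : h ∘L ρ = ∑ k, (lam k : ℂ) • ketbra (h (ψ k)) (ψ k) := by
    rw [hρ]
    ext x
    simp [ketbra_apply', ContinuousLinearMap.sum_apply, map_sum, map_smul, smul_smul]
  have hop2 : h ∘L h ∘L ρ = ∑ k, (lam k : ℂ) • ketbra (h (h (ψ k))) (ψ k) := by
    rw [hρ]
    ext x
    simp [ketbra_apply', ContinuousLinearMap.sum_apply, map_sum, map_smul, smul_smul]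
  have htr1 : tr (h ∘L ρ) = ((ω₁ : ℂ) + ω₂) / 2 := by
    rw [hop1, tr_sum]
    simp_rw [tr_smul, tr_ketbra, e1]
    rw [← Finset.sum_mul, hsumC, one_mul]
  have htr2 : tr (h ∘L h ∘L ρ) = ((ω₁ : ℂ) ^ 2 + (ω₂ : ℂ) ^ 2) / 2 := by
    rw [hop2, tr_sum]
    simp_rw [tr_smul, tr_ketbra, e2]
    rw [← Finset.sum_mul, hsumC, one_mul]
  have hvar : varMix h ρ = ((ω₂ - ω₁) / 2) ^ 2 := by
    rw [varMix, expMix, htr1, htr2]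
    simp only [← Complex.ofReal_pow, Complex.div_re, Complex.add_re, Complex.ofReal_re,
      Complex.add_im, Complex.ofReal_im]
    norm_num
    ring
  have hsqrt : Real.sqrt (varMix h ρ) = (ω₂ - ω₁) / 2 := by
    rw [hvar, Real.sqrt_sq (by linarith)]
  refine ⟨hsqrt, ?_⟩
  intro t
  have hUψ : ∀ (s : ℝ) k, timeEv h s (ψ k)
      = cexp (-(I * (s : ℂ)) * ω₁) • φv k 0 + cexp (-(I * (s : ℂ)) * ω₂) • φv k 1 := by
    intro s k
    rw [hψ, timeEv, map_add,
      exp_apply_eigen_s19 _ _ _ (by rw [ContinuousLinearMap.smul_apply, heig1, smul_smul]),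
      exp_apply_eigen_s19 _ _ _ (by rw [ContinuousLinearMap.smul_apply, heig2, smul_smul])]
  have hinnerU : ∀ (s : ℝ) k l, ⟪ψ k, timeEv h s (ψ l)⟫_ℂ
      = if k = l then (cexp (-(I * (s : ℂ)) * ω₁) + cexp (-(I * (s : ℂ)) * ω₂)) / 2 else 0 := by
    intro s k l
    rw [hUψ, hψ]
    by_cases hkl : k = l
    · subst hkl
      simp only [inner_add_left, inner_add_right, inner_smul_right, hinner, h01, h10,
        and_true, and_false, if_true, if_false, eq_self_iff_true, if_pos rfl]
      ring
    · simp only [inner_add_left, inner_add_right, inner_smul_right, hinner, hkl,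
        false_and, if_false, if_neg hkl]
      simp [hkl]
  set c₁ : ℂ := (cexp (-(I * (t : ℂ)) * ω₁) + cexp (-(I * (t : ℂ)) * ω₂)) / 2 with hc₁
  set c₂ : ℂ := (cexp (-(I * ((-t : ℝ) : ℂ)) * ω₁) + cexp (-(I * ((-t : ℝ) : ℂ)) * ω₂)) / 2
    with hc₂
  have hρapp : ∀ l, ρ (timeEv h (-t) (ψ l)) = ((lam l : ℂ) * c₂) • ψ l := by
    intro l
    rw [hρ]
    simp only [ContinuousLinearMap.sum_apply, ContinuousLinearMap.smul_apply, ketbra_apply',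
      hinnerU]
    rw [Finset.sum_eq_single l]
    · rw [if_pos rfl, ← hc₂, smul_smul]
    · intro k _ hkl; rw [if_neg hkl, zero_smul, smul_zero]
    · intro hl; exact absurd (Finset.mem_univ l) hl
  have hterm : ∀ l, ⟪ψ l, timeEv h t (ρ (timeEv h (-t) (ψ l)))⟫_ℂ
      = (lam l : ℂ) * (c₂ * c₁) := by
    intro l
    rw [hρapp, map_smul, inner_smul_right, hinnerU, if_pos rfl]
    rw [← hc₁]; ring
  have hop3 : (timeEv h t ∘L ρ ∘L timeEv h (-t)) ∘L Pr
      = ∑ l, ketbra (timeEv h t (ρ (timeEv h (-t) (ψ l)))) (ψ l) := by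
    rw [hPr]
    ext x
    simp [ketbra_apply', ContinuousLinearMap.sum_apply, map_sum, map_smul]
  have htr3 : tr (Pr ∘L timeEv h t ∘L ρ ∘L timeEv h (-t)) = c₂ * c₁ := by
    rw [tr_comp_comm, hop3, tr_sum]
    simp_rw [tr_ketbra, hterm]
    rw [← Finset.sum_mul, hsumC, one_mul]
  rw [survPMix, htr3, hsqrt]
  have ea1 : -(I * ((-t : ℝ) : ℂ)) * (ω₁ : ℂ) = (((t * ω₁ : ℝ)) : ℂ) * I := by
    push_cast; ring
  have ea2 : -(I * ((-t : ℝ) : ℂ)) * (ω₂ : ℂ) = (((t * ω₂ : ℝ)) : ℂ) * I := by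
    push_cast; ring
  have eb1 : -(I * (t : ℂ)) * (ω₁ : ℂ) = (((-(t * ω₁) : ℝ)) : ℂ) * I := by
    push_cast; ring
  have eb2 : -(I * (t : ℂ)) * (ω₂ : ℂ) = (((-(t * ω₂) : ℝ)) : ℂ) * I := by
    push_cast; ring
  rw [hc₁, hc₂, ea1, ea2, eb1, eb2, key_re (t * ω₁) (t * ω₂)]
  rw [Real.cos_sq]
  rw [show 2 * ((ω₂ - ω₁) / 2 * t) = t * ω₂ - t * ω₁ by ring]
  ring
end
end
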